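/- arXiv:1609.05013 — 5 statements merged into one kernel-verified Lean document; each statement's English description precedes it below -/
import Mathlib

section
/- For every permutation σ of {0,…,n} and every (n+1)-tuple x = (x₀,…,x_n) of vertices of T, one has Σ_{0≤i≤j≤n} p_{i,j}^{σ·x}(σ·x) = sgn(σ) · Σ_{0≤i≤j≤n} p_{i,j}^x(x) in A_n(T,ℤ), where σ·x = (x_{σ(0)},…,x_{σ(n)}). Consequently, the formula φ_n(x) = Σ_{0≤i≤j≤n} p_{i,j}^x(x) determines a well-defined group homomorphism φ_n : C_n(T,ℤ) → A_n(T,ℤ). -/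
/-!
Common definitions: trees are modelled as simple graphs `G` on a vertex type `V`
satisfying `G.IsTree`; `Seg G a b` is the geodesic segment `[a,b]` (the set of
vertices lying on the geodesic from `a` to `b`); `Aligned` tuples are those
contained in some geodesic segment; `AltChain V R n` is the module `C_n(T,R)` of
alternating `n`-chains; `chainOf x` is the class of a tuple; `alignedSub G R n`
is `A_n(T,R)`; `cnorm` is the ℓ¹-quotient norm.
-/

open Finsupp

variable {V : Type*}

/-- The geodesic segment `[a,b]`: the set of vertices on the geodesic from `a` to `b`. -/
def Seg (G : SimpleGraph V) (a b : V) : Set V :=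
  {v | G.dist a v + G.dist v b = G.dist a b}

/-- A tuple of vertices is aligned if its coordinates are contained in some geodesic
segment. -/
def Aligned (G : SimpleGraph V) {n : ℕ} (x : Fin n → V) : Prop :=
  ∃ a b : V, ∀ k, x k ∈ Seg G a b

/-- `proj a b` is the nearest-point projection onto the segment `[a,b]`. -/
def IsProj (G : SimpleGraph V) (proj : V → V → V → V) : Prop :=
  ∀ a b v : V, proj a b v ∈ Seg G a b ∧
    ∀ w ∈ Seg G a b, G.dist v (proj a b v) ≤ G.dist v w

/-- The submodule of relations defining alternating chains: each tuple is identified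
with `sgn σ` times its permutation by `σ`. -/
noncomputable def altRel (V : Type*) (R : Type*) [CommRing R] (n : ℕ) :
    Submodule R ((Fin (n + 1) → V) →₀ R) :=
  Submodule.span R {f | ∃ (x : Fin (n + 1) → V) (σ : Equiv.Perm (Fin (n + 1))),
    f = Finsupp.single x 1 - ((Equiv.Perm.sign σ : ℤ) : R) • Finsupp.single (x ∘ σ) 1}

/-- The module `C_n(T,R)` of alternating `n`-chains. -/
abbrev AltChain (V : Type*) (R : Type*) [CommRing R] (n : ℕ) :=
  ((Fin (n + 1) → V) →₀ R) ⧸ altRel V R n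

/-- The alternating chain determined by an `(n+1)`-tuple. -/
noncomputable def chainOf {R : Type*} [CommRing R] {n : ℕ} (x : Fin (n + 1) → V) :
    AltChain V R n :=
  Submodule.Quotient.mk (Finsupp.single x 1)

/-- The submodule `A_n(T,R)` of aligned chains, spanned by aligned tuples. -/
noncomputable def alignedSub (G : SimpleGraph V) (R : Type*) [CommRing R] (n : ℕ) :
    Submodule R (AltChain V R n) :=
  Submodule.span R {c | ∃ x : Fin (n + 1) → V, Aligned G x ∧ c = chainOf x}

/-- The map `φₙ` on tuples: `φₙ(x) = ∑_{i ≤ j} p_{i,j}^x(x)`, where `p_{i,j}^x` is the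
nearest-point projection onto `[xᵢ,xⱼ]` applied coordinatewise. -/
noncomputable def phiTuple {R : Type*} [CommRing R] {n : ℕ} (proj : V → V → V → V)
    (x : Fin (n + 1) → V) : AltChain V R n :=
  ∑ i : Fin (n + 1), ∑ j : Fin (n + 1),
    if i ≤ j then chainOf (fun k => proj (x i) (x j) (x k)) else 0

/-- The quotient norm on real alternating chains induced by the ℓ¹-norm. -/
noncomputable def cnorm {n : ℕ} (c : AltChain V ℝ n) : ℝ :=
  sInf {r : ℝ | ∃ f : (Fin (n + 1) → V) →₀ ℝ,
    (Submodule.Quotient.mk f : AltChain V ℝ n) = c ∧ r = ∑ x ∈ f.support, |f x|}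


section AuxTree

lemma seg_comm (G : SimpleGraph V) (a b : V) : Seg G a b = Seg G b a := by
  ext v
  have e1 : G.dist b v = G.dist v b := SimpleGraph.dist_comm
  have e2 : G.dist a v = G.dist v a := SimpleGraph.dist_comm
  have e3 : G.dist a b = G.dist b a := SimpleGraph.dist_comm
  simp only [Seg, Set.mem_setOf_eq, e1, e2, e3]
  omega

/-- Points on a geodesic walk satisfy the distance splitting equality. -/
lemma mem_seg_of_mem_support {G : SimpleGraph V} (hc : G.Connected) {s t u : V}
    {γ : G.Walk s t} (hγ : γ.length = G.dist s t) (hu : u ∈ γ.support) :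
    G.dist s u + G.dist u t = G.dist s t := by
  classical
  have h1 : G.dist s u ≤ (γ.takeUntil u hu).length := G.dist_le _
  have h2 : G.dist u t ≤ (γ.dropUntil u hu).length := G.dist_le _
  have h3 : (γ.takeUntil u hu).length + (γ.dropUntil u hu).length = γ.length := by
    rw [← SimpleGraph.Walk.length_append, γ.take_spec hu]
  have h4 := hc.dist_triangle (u := s) (v := u) (w := t)
  omega

/-- In a tree, every vertex of `Seg a b` lies on any path from `a` to `b`. -/
lemma mem_support_of_mem_seg {G : SimpleGraph V} (hT : G.IsTree) {a b w : V}
    {γ : G.Walk a b} (hγ : γ.IsPath) (hw : w ∈ Seg G a b) : w ∈ γ.support := by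
  obtain ⟨p1, hp1⟩ := (hT.isConnected a w).exists_walk_length_eq_dist
  obtain ⟨p2, hp2⟩ := (hT.isConnected w b).exists_walk_length_eq_dist
  have hlen : (p1.append p2).length = G.dist a b := by
    rw [SimpleGraph.Walk.length_append, hp1, hp2]; exact hw
  have hpath : (p1.append p2).IsPath := (p1.append p2).isPath_of_length_eq_dist hlen
  have : (⟨p1.append p2, hpath⟩ : G.Path a b) = ⟨γ, hγ⟩ := hT.IsAcyclic.path_unique _ _
  have h := congrArg Subtype.val this
  simp only at h
  rw [← h]
  exact SimpleGraph.Walk.subset_support_append_left _ _ (p1.end_mem_support)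

/-- A path between two vertices of the support of a path `γ`, with support inside `γ`'s. -/
lemma exists_path_in_support {G : SimpleGraph V} {a b p q : V} {γ : G.Walk a b}
    (hγ : γ.IsPath) (hp : p ∈ γ.support) (hq : q ∈ γ.support) :
    ∃ δ : G.Walk p q, δ.IsPath ∧ ∀ u ∈ δ.support, u ∈ γ.support := by
  classical
  by_cases h : q ∈ (γ.dropUntil p hp).support
  · refine ⟨((γ.dropUntil p hp)).takeUntil q h, (hγ.dropUntil hp).takeUntil h, fun u hu => ?_⟩
    exact SimpleGraph.Walk.support_dropUntil_subset _ _
      (SimpleGraph.Walk.support_takeUntil_subset _ _ hu)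
  · have hq' : q ∈ (γ.takeUntil p hp).support := by
      have := γ.take_spec hp
      rw [← this] at hq
      rcases (SimpleGraph.Walk.mem_support_append_iff _ _).mp hq with h1 | h2
      · exact h1
      · exact absurd h2 h
    refine ⟨((γ.takeUntil p hp).dropUntil q hq').reverse,
      ((hγ.takeUntil hp).dropUntil hq').reverse, fun u hu => ?_⟩
    rw [SimpleGraph.Walk.support_reverse, List.mem_reverse] at hu
    exact SimpleGraph.Walk.support_takeUntil_subset _ _
      (SimpleGraph.Walk.support_dropUntil_subset _ _ hu)

/-- Nearest-point projections onto the same segment agree in a tree. -/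
lemma proj_symm {G : SimpleGraph V} (hT : G.IsTree) {proj : V → V → V → V}
    (hproj : IsProj G proj) (a b v : V) : proj a b v = proj b a v := by
  classical
  set p := proj a b v with hpdef
  set q := proj b a v with hqdef
  have hconn := hT.isConnected
  obtain ⟨hpS, hpmin⟩ := hproj a b v
  obtain ⟨hqS', hqmin'⟩ := hproj b a v
  rw [← hpdef] at hpS hpmin
  rw [← hqdef] at hqS' hqmin'
  clear_value p q
  have hqS : q ∈ Seg G a b := by rw [seg_comm]; exact hqS'
  have hqmin : ∀ w ∈ Seg G a b, G.dist v q ≤ G.dist v w := by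
    intro w hw; exact hqmin' w (by rwa [← seg_comm])
  by_contra hne
  have hdq : G.dist v q = G.dist v p := le_antisymm (hqmin p hpS) (hpmin q hqS)
  obtain ⟨α, hαp, hαl⟩ := hconn.exists_path_of_dist v p
  obtain ⟨β, hβp, hβl⟩ := hconn.exists_path_of_dist v q
  have keyα : ∀ u ∈ α.support, u ∈ Seg G a b → u = p := by
    intro u hu huS
    have h1 := mem_seg_of_mem_support hconn hαl hu
    have h2 := hpmin u huS
    have : G.dist u p = 0 := by omega
    exact (hconn.dist_eq_zero_iff.mp this)
  have keyβ : ∀ u ∈ β.support, u ∈ Seg G a b → u = q := by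
    intro u hu huS
    have h1 := mem_seg_of_mem_support hconn hβl hu
    have h2 := hqmin u huS
    have : G.dist u q = 0 := by omega
    exact (hconn.dist_eq_zero_iff.mp this)
  obtain ⟨γ, hγp, hγl⟩ := hconn.exists_path_of_dist a b
  have hγseg : ∀ u ∈ γ.support, u ∈ Seg G a b := fun u hu =>
    mem_seg_of_mem_support hconn hγl hu
  obtain ⟨δ, hδp, hδsub⟩ := exists_path_in_support hγp
    (mem_support_of_mem_seg hT hγp hpS) (mem_support_of_mem_seg hT hγp hqS)
  have hδseg : ∀ u ∈ δ.support, u ∈ Seg G a b := fun u hu => hγseg u (hδsub u hu)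
  set W := α.reverse.append β with hW
  have hWb : W.bypass.IsPath := W.bypass_isPath
  have hδW : δ = W.bypass := by
    have : (⟨δ, hδp⟩ : G.Path p q) = ⟨W.bypass, hWb⟩ := hT.IsAcyclic.path_unique _ _
    exact congrArg Subtype.val this
  have hδsupW : ∀ u ∈ δ.support, u ∈ α.support ∨ u ∈ β.support := by
    intro u hu
    rw [hδW] at hu
    have := W.support_bypass_subset hu
    rcases (SimpleGraph.Walk.mem_support_append_iff _ _).mp this with h1 | h2
    · left; rwa [SimpleGraph.Walk.support_reverse, List.mem_reverse] at h1
    · right; exact h2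
  cases δ with
  | nil => exact hne rfl
  | cons h δ' =>
    rename_i u
    have huδ : u ∈ (SimpleGraph.Walk.cons h δ').support :=
      List.mem_cons_of_mem _ δ'.start_mem_support
    have huS : u ∈ Seg G a b := hδseg u huδ
    have hu_ne_p : u ≠ p := by
      intro h'
      have := (SimpleGraph.Walk.cons_isPath_iff h δ').mp hδp
      exact this.2 (h' ▸ δ'.start_mem_support)
    have huq : u = q := by
      rcases hδsupW u huδ with h1 | h2
      · exact absurd (keyα u h1 huS) hu_ne_p
      · exact keyβ u h2 huS
    have hadj : G.Adj p q := huq ▸ h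
    have hqα : q ∉ α.support := fun hmem => hne (keyα q hmem hqS).symm
    have hcp : (α.concat hadj).IsPath := by
      rw [← SimpleGraph.Walk.isPath_reverse_iff, SimpleGraph.Walk.reverse_concat]
      refine (SimpleGraph.Walk.cons_isPath_iff _ _).mpr ⟨hαp.reverse, ?_⟩
      rwa [SimpleGraph.Walk.support_reverse, List.mem_reverse]
    have : (⟨α.concat hadj, hcp⟩ : G.Path v q) = ⟨β, hβp⟩ := hT.IsAcyclic.path_unique _ _
    have hlen := congrArg (fun (x : G.Path v q) => x.val.length) this
    simp only [SimpleGraph.Walk.length_concat] at hlen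
    omega

end AuxTree

section AuxAlg

lemma signMulSelfInt {k : ℕ} (σ : Equiv.Perm (Fin k)) :
    ((Equiv.Perm.sign σ : ℤ)) * ((Equiv.Perm.sign σ : ℤ)) = 1 := by
  rw [← Units.val_mul, Int.units_mul_self, Units.val_one]

lemma chainOf_eq_sign_smul {n : ℕ} (y : Fin (n + 1) → V) (σ : Equiv.Perm (Fin (n + 1))) :
    (chainOf (y ∘ σ) : AltChain V ℤ n) = (Equiv.Perm.sign σ : ℤ) • chainOf y := by
  have hmem : (Finsupp.single y 1 - ((Equiv.Perm.sign σ : ℤ) : ℤ) • Finsupp.single (y ∘ σ) 1)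
      ∈ altRel V ℤ n := Submodule.subset_span ⟨y, σ, rfl⟩
  have h0 : (Submodule.Quotient.mk (Finsupp.single y 1 -
      ((Equiv.Perm.sign σ : ℤ) : ℤ) • Finsupp.single (y ∘ σ) 1) : AltChain V ℤ n) = 0 :=
    (Submodule.Quotient.mk_eq_zero _).mpr hmem
  rw [Submodule.Quotient.mk_sub, Submodule.Quotient.mk_smul, sub_eq_zero] at h0
  have h1 : (chainOf y : AltChain V ℤ n) = (Equiv.Perm.sign σ : ℤ) • chainOf (y ∘ σ) := by
    simpa [chainOf, Int.cast_id] using h0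
  have := congrArg (fun c => ((Equiv.Perm.sign σ : ℤ)) • c) h1
  simpa [smul_smul, signMulSelfInt] using this.symm

lemma sum_pairs_perm {M : Type*} [AddCommMonoid M] {m : ℕ} (σ : Equiv.Perm (Fin m))
    (c : Fin m → Fin m → M) (hsym : ∀ a b, c a b = c b a) :
    (∑ i, ∑ j, if i ≤ j then c (σ i) (σ j) else 0) = ∑ i, ∑ j, if i ≤ j then c i j else 0 := by
  rw [← Finset.sum_product' (f := fun i j => if i ≤ j then c (σ i) (σ j) else 0),
    ← Finset.sum_product' (f := fun i j => if i ≤ j then c i j else 0),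
    ← Finset.sum_filter, ← Finset.sum_filter]
  refine Finset.sum_nbij'
    (fun p => if σ p.1 ≤ σ p.2 then (σ p.1, σ p.2) else (σ p.2, σ p.1))
    (fun q => if σ⁻¹ q.1 ≤ σ⁻¹ q.2 then (σ⁻¹ q.1, σ⁻¹ q.2) else (σ⁻¹ q.2, σ⁻¹ q.1))
    ?_ ?_ ?_ ?_ ?_
  · intro p hp; split_ifs with h <;> simp_all [le_of_not_ge]
  · intro q hq; split_ifs with h <;> simp_all [le_of_not_ge]
  · intro p hp
    simp only [Finset.mem_filter] at hp
    split_ifs with h h2 h3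
    · simp
    · simp at h2; exact absurd hp.2 (by simpa using h2)
    · have hne : p.1 ≠ p.2 := by intro he; rw [he] at h; exact h le_rfl
      have : ¬ (σ⁻¹ (σ p.2) ≤ σ⁻¹ (σ p.1)) := by
        simpa using (lt_of_le_of_ne hp.2 hne).not_ge
      exact absurd h3 this
    · simp
  · intro q hq
    simp only [Finset.mem_filter] at hq
    split_ifs with h h2 h3
    · simp
    · simp at h2; exact absurd hq.2 (by simpa using h2)
    · have hne : q.1 ≠ q.2 := by
        intro he; rw [he] at h; exact h le_rfl
      have : ¬ (σ (σ⁻¹ q.2) ≤ σ (σ⁻¹ q.1)) := by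
        simpa using (lt_of_le_of_ne hq.2 hne).not_ge
      exact absurd h3 this
    · simp
  · intro p hp
    split_ifs with h
    · rfl
    · exact hsym _ _

lemma phiTuple_perm {n : ℕ} {proj : V → V → V → V}
    (hsymm : ∀ a b v : V, proj a b v = proj b a v)
    (σ : Equiv.Perm (Fin (n + 1))) (x : Fin (n + 1) → V) :
    phiTuple (R := ℤ) proj (x ∘ σ) = (Equiv.Perm.sign σ : ℤ) • phiTuple (R := ℤ) proj x := by
  unfold phiTuple
  have step1 : ∀ i j : Fin (n + 1),
      (chainOf (fun k => proj ((x ∘ σ) i) ((x ∘ σ) j) ((x ∘ σ) k)) : AltChain V ℤ n)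
        = (Equiv.Perm.sign σ : ℤ) • chainOf (fun k => proj (x (σ i)) (x (σ j)) (x k)) := by
    intro i j
    have he : (fun k => proj ((x ∘ σ) i) ((x ∘ σ) j) ((x ∘ σ) k))
        = (fun k => proj (x (σ i)) (x (σ j)) (x k)) ∘ σ := rfl
    rw [he, chainOf_eq_sign_smul]
  calc (∑ i, ∑ j, if i ≤ j then
          (chainOf (fun k => proj ((x ∘ σ) i) ((x ∘ σ) j) ((x ∘ σ) k)) : AltChain V ℤ n) else 0)
      = ∑ i, ∑ j, if i ≤ j then (Equiv.Perm.sign σ : ℤ) •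
          (chainOf (fun k => proj (x (σ i)) (x (σ j)) (x k)) : AltChain V ℤ n) else 0 := by
        refine Finset.sum_congr rfl fun i _ => Finset.sum_congr rfl fun j _ => ?_
        split_ifs
        · exact step1 i j
        · rfl
    _ = (Equiv.Perm.sign σ : ℤ) • ∑ i, ∑ j, if i ≤ j then
          (chainOf (fun k => proj (x (σ i)) (x (σ j)) (x k)) : AltChain V ℤ n) else 0 := by
        simp only [Finset.smul_sum, smul_ite, smul_zero]
    _ = (Equiv.Perm.sign σ : ℤ) • ∑ i, ∑ j, if i ≤ j then
          (chainOf (fun k => proj (x i) (x j) (x k)) : AltChain V ℤ n) else 0 := by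
        congr 1
        exact sum_pairs_perm σ (fun a b => chainOf (fun k => proj (x a) (x b) (x k)))
          (fun a b => by simp only [fun k => hsymm (x a) (x b) (x k)])

lemma phiTuple_mem_alignedSub {n : ℕ} {G : SimpleGraph V} {proj : V → V → V → V}
    (hproj : IsProj G proj) (x : Fin (n + 1) → V) :
    phiTuple (R := ℤ) proj x ∈ alignedSub G ℤ n := by
  unfold phiTuple
  refine Submodule.sum_mem _ fun i _ => Submodule.sum_mem _ fun j _ => ?_
  split_ifs
  · exact Submodule.subset_span
      ⟨fun k => proj (x i) (x j) (x k),
        ⟨x i, x j, fun k => (hproj (x i) (x j) (x k)).1⟩, rfl⟩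
  · exact Submodule.zero_mem _

end AuxAlg

/-- For every permutation `σ` of `{0,…,n}` and every `(n+1)`-tuple `x`,
`∑_{i≤j} p_{i,j}^{σ·x}(σ·x) = sgn(σ) · ∑_{i≤j} p_{i,j}^x(x)` in `A_n(T,ℤ)`; consequently
`φ_n(x) = ∑_{i≤j} p_{i,j}^x(x)` determines a well-defined group homomorphism
`φ_n : C_n(T,ℤ) → A_n(T,ℤ)`. -/
theorem statement1 (G : SimpleGraph V) (hT : G.IsTree)
    (proj : V → V → V → V) (hproj : IsProj G proj) (n : ℕ) :
    (∀ (σ : Equiv.Perm (Fin (n + 1))) (x : Fin (n + 1) → V),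
      phiTuple (R := ℤ) proj (x ∘ σ) = (Equiv.Perm.sign σ : ℤ) • phiTuple (R := ℤ) proj x) ∧
    ∃ φ : AltChain V ℤ n →ₗ[ℤ] AltChain V ℤ n,
      (∀ c : AltChain V ℤ n, φ c ∈ alignedSub G ℤ n) ∧
      ∀ x : Fin (n + 1) → V, φ (chainOf x) = phiTuple proj x := by
  have hsymm : ∀ a b v : V, proj a b v = proj b a v := proj_symm hT hproj
  have part1 : ∀ (σ : Equiv.Perm (Fin (n + 1))) (x : Fin (n + 1) → V),
      phiTuple (R := ℤ) proj (x ∘ σ) = (Equiv.Perm.sign σ : ℤ) • phiTuple (R := ℤ) proj x :=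
    fun σ x => phiTuple_perm hsymm σ x
  refine ⟨part1, ?_⟩
  set F : ((Fin (n + 1) → V) →₀ ℤ) →ₗ[ℤ] AltChain V ℤ n :=
    Finsupp.linearCombination ℤ (fun x => phiTuple (R := ℤ) proj x) with hF
  have hker : altRel V ℤ n ≤ LinearMap.ker F := by
    refine Submodule.span_le.mpr ?_
    rintro f ⟨x, σ, rfl⟩
    simp only [SetLike.mem_coe, LinearMap.mem_ker, map_sub, map_smul, hF,
      Finsupp.linearCombination_single, one_smul]
    rw [part1 σ x]
    simp only [Int.cast_id, smul_smul, signMulSelfInt, one_smul, sub_self]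
  refine ⟨(altRel V ℤ n).liftQ F hker, ?_, ?_⟩
  · intro c
    obtain ⟨f, rfl⟩ := Submodule.Quotient.mk_surjective _ c
    rw [Submodule.liftQ_apply, hF, Finsupp.linearCombination_apply, Finsupp.sum]
    exact Submodule.sum_mem _ fun x _ =>
      Submodule.smul_mem _ _ (phiTuple_mem_alignedSub hproj x)
  · intro x
    rw [chainOf, Submodule.liftQ_apply, hF, Finsupp.linearCombination_single, one_smul]
end

section
/- The map φ_n extends to a bounded linear operator C_n(T,ℝ) → A_n(T,ℝ) with respect to the ℓ¹-quotient norms, of operator norm at most (n+1)(n+2)/2. -/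
/-!
Common definitions: trees are modelled as simple graphs `G` on a vertex type `V`
satisfying `G.IsTree`; `Seg G a b` is the geodesic segment `[a,b]` (the set of
vertices lying on the geodesic from `a` to `b`); `Aligned` tuples are those
contained in some geodesic segment; `AltChain V R n` is the module `C_n(T,R)` of
alternating `n`-chains; `chainOf x` is the class of a tuple; `alignedSub G R n`
is `A_n(T,R)`; `cnorm` is the ℓ¹-quotient norm.
-/

open Finsupp

variable {V : Type*}

namespace S3


variable {G : SimpleGraph V}

lemma path_length (hT : G.IsTree) {a b : V} {p : G.Walk a b} (hp : p.IsPath) :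
    p.length = G.dist a b := by
  classical
  obtain ⟨w, hw⟩ := hT.isConnected.exists_walk_length_eq_dist a b
  have hu := SimpleGraph.isAcyclic_iff_path_unique.mp hT.IsAcyclic
  have h1 : (⟨p, hp⟩ : G.Path a b) = w.toPath := hu _ _
  have h2 : p.length ≤ w.length := by
    have : p = (w.toPath : G.Walk a b) := congrArg Subtype.val h1
    rw [this]
    exact SimpleGraph.Walk.length_bypass_le w
  exact le_antisymm (hw ▸ h2) (SimpleGraph.dist_le p)

lemma start_not_mem_tail {a b : V} {s : G.Walk a b} (hs : s.IsPath) :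
    a ∉ s.support.tail := by
  have h := hs.support_nodup
  rw [s.support_eq_cons] at h
  exact (List.nodup_cons.mp h).1

lemma split (hT : G.IsTree) {a b v : V} {p : G.Walk a b} (hp : p.IsPath)
    (hv : v ∈ p.support) : G.dist a v + G.dist v b = G.dist a b := by
  classical
  have h1 : (p.takeUntil v hv).length = G.dist a v := path_length hT (hp.takeUntil hv)
  have h2 : (p.dropUntil v hv).length = G.dist v b := path_length hT (hp.dropUntil hv)
  have h3 := p.take_spec hv
  have h4 : (p.takeUntil v hv).length + (p.dropUntil v hv).length = p.length := by
    rw [← SimpleGraph.Walk.length_append, h3]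
  rw [h1, h2, path_length hT hp] at h4
  exact h4

lemma mem_seg_iff (hT : G.IsTree) {a b v : V} (p : G.Walk a b) (hp : p.IsPath) :
    v ∈ Seg G a b ↔ v ∈ p.support := by
  classical
  constructor
  · intro h
    obtain ⟨q0, hq0⟩ := hT.isConnected.exists_walk_length_eq_dist a v
    obtain ⟨r0, hr0⟩ := hT.isConnected.exists_walk_length_eq_dist v b
    set q : G.Walk a v := (q0.toPath : G.Walk a v) with hqdef
    set r : G.Walk v b := (r0.toPath : G.Walk v b) with hrdef
    have hq : q.IsPath := q0.toPath.property
    have hr : r.IsPath := r0.toPath.property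
    have hqr : (q.append r).IsPath := by
      rw [SimpleGraph.Walk.isPath_def, SimpleGraph.Walk.support_append]
      refine List.Nodup.append hq.support_nodup (hr.support_nodup.sublist (List.tail_sublist _)) ?_
      intro u huq hur
      have hur' : u ∈ r.support := List.mem_of_mem_tail hur
      have e1 : G.dist a u + G.dist u v = G.dist a v := split hT hq huq
      have e2 : G.dist v u + G.dist u b = G.dist v b := split hT hr hur'
      have tri : G.dist a b ≤ G.dist a u + G.dist u b := hT.isConnected.dist_triangle
      have huv : G.dist u v = 0 := by
        have hseg : G.dist a v + G.dist v b = G.dist a b := h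
        have hcm : G.dist v u = G.dist u v := SimpleGraph.dist_comm
        omega
      have : u = v := hT.isConnected.dist_eq_zero_iff.mp huv
      subst this
      exact absurd hur (start_not_mem_tail hr)
    have hu := SimpleGraph.isAcyclic_iff_path_unique.mp hT.IsAcyclic
    have h1 : (⟨q.append r, hqr⟩ : G.Path a b) = ⟨p, hp⟩ := hu _ _
    have h2 : q.append r = p := congrArg Subtype.val h1
    rw [← h2, SimpleGraph.Walk.mem_support_append_iff]
    left
    exact SimpleGraph.Walk.end_mem_support q
  · intro h
    exact split hT hp h

lemma min_unique (hT : G.IsTree) {a b v w1 w2 : V}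
    (h1 : w1 ∈ Seg G a b) (h2 : w2 ∈ Seg G a b)
    (m1 : ∀ w ∈ Seg G a b, G.dist v w1 ≤ G.dist v w)
    (m2 : ∀ w ∈ Seg G a b, G.dist v w2 ≤ G.dist v w) : w1 = w2 := by
  classical
  -- auxiliary: if there is a path from w1 to w2 inside Seg G a b, then w1 = w2
  have aux : ∀ (u1 u2 : V) (s : G.Walk u1 u2), s.IsPath →
      (∀ u ∈ s.support, u ∈ Seg G a b) →
      (∀ w ∈ Seg G a b, G.dist v u1 ≤ G.dist v w) →
      (∀ w ∈ Seg G a b, G.dist v u2 ≤ G.dist v w) → u1 = u2 := by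
    intro u1 u2 s hs hseg mm1 mm2
    obtain ⟨q0, hq0⟩ := hT.isConnected.exists_walk_length_eq_dist v u1
    set q : G.Walk v u1 := (q0.toPath : G.Walk v u1) with hqdef
    have hq : q.IsPath := q0.toPath.property
    have hqs : (q.append s).IsPath := by
      rw [SimpleGraph.Walk.isPath_def, SimpleGraph.Walk.support_append]
      refine List.Nodup.append hq.support_nodup (hs.support_nodup.sublist (List.tail_sublist _)) ?_
      intro u huq hus
      have hus' : u ∈ s.support := List.mem_of_mem_tail hus
      have e1 : G.dist v u + G.dist u u1 = G.dist v u1 := split hT hq huq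
      have e3 : G.dist v u1 ≤ G.dist v u := mm1 u (hseg u hus')
      have hu1 : G.dist u u1 = 0 := by omega
      have hd : G.dist u u1 = G.dist u1 u := SimpleGraph.dist_comm
      have : u1 = u := hT.isConnected.dist_eq_zero_iff.mp (by omega)
      subst this
      exact absurd hus (start_not_mem_tail hs)
    have hlen : (q.append s).length = G.dist v u2 := path_length hT hqs
    rw [SimpleGraph.Walk.length_append] at hlen
    have hql : q.length = G.dist v u1 := path_length hT hq
    have e4 : G.dist v u2 ≤ G.dist v u1 :=
      mm2 u1 (hseg u1 (SimpleGraph.Walk.start_mem_support s))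
    have : s.length = 0 := by omega
    exact SimpleGraph.Walk.eq_of_length_eq_zero this
  obtain ⟨p0, hp0⟩ := hT.isConnected.exists_walk_length_eq_dist a b
  set p : G.Walk a b := (p0.toPath : G.Walk a b) with hpdef
  have hp : p.IsPath := p0.toPath.property
  have hw1 : w1 ∈ p.support := (mem_seg_iff hT p hp).mp h1
  have hw2 : w2 ∈ p.support := (mem_seg_iff hT p hp).mp h2
  have hsplit := p.take_spec hw1
  have : w2 ∈ (p.takeUntil w1 hw1).support ∨ w2 ∈ (p.dropUntil w1 hw1).support := by
    rw [← SimpleGraph.Walk.mem_support_append_iff, hsplit]; exact hw2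
  rcases this with hc | hc
  · -- w2 comes before w1 : use aux from w2 to w1
    have htake : (p.takeUntil w1 hw1).IsPath := hp.takeUntil hw1
    set s : G.Walk w2 w1 := (p.takeUntil w1 hw1).dropUntil w2 hc with hsdef
    have hs : s.IsPath := htake.dropUntil hc
    refine (aux w2 w1 s hs ?_ m2 m1).symm
    intro u hu
    have : u ∈ p.support :=
      (p.support_takeUntil_subset hw1) ((p.takeUntil w1 hw1).support_dropUntil_subset hc hu)
    exact (mem_seg_iff hT p hp).mpr this
  · have hdrop : (p.dropUntil w1 hw1).IsPath := hp.dropUntil hw1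
    set s : G.Walk w1 w2 := (p.dropUntil w1 hw1).takeUntil w2 hc with hsdef
    have hs : s.IsPath := hdrop.takeUntil hc
    refine aux w1 w2 s hs ?_ m1 m2
    intro u hu
    have : u ∈ p.support :=
      (p.support_dropUntil_subset hw1) ((p.dropUntil w1 hw1).support_takeUntil_subset hc hu)
    exact (mem_seg_iff hT p hp).mpr this

lemma seg_comm (a b : V) : Seg G b a = Seg G a b := by
  ext v
  simp only [Seg, Set.mem_setOf_eq]
  have h1 : G.dist b v = G.dist v b := SimpleGraph.dist_comm
  have h2 : G.dist v a = G.dist a v := SimpleGraph.dist_comm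
  have h3 : G.dist b a = G.dist a b := SimpleGraph.dist_comm
  omega

lemma proj_symm (hT : G.IsTree) {proj : V → V → V → V} (hproj : IsProj G proj)
    (a b v : V) : proj a b v = proj b a v := by
  obtain ⟨ha, hma⟩ := hproj a b v
  obtain ⟨hb, hmb⟩ := hproj b a v
  rw [seg_comm] at hb hmb
  exact min_unique hT ha hb hma hmb



/-! ### ℓ¹ norm on finsupps -/

noncomputable def l1 {α : Type*} (f : α →₀ ℝ) : ℝ := ∑ x ∈ f.support, |f x|

lemma l1_nonneg {α : Type*} (f : α →₀ ℝ) : 0 ≤ l1 f :=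
  Finset.sum_nonneg fun _ _ => abs_nonneg _

lemma l1_eq_sum {α : Type*} (f : α →₀ ℝ) {s : Finset α} (hs : f.support ⊆ s) :
    l1 f = ∑ x ∈ s, |f x| := by
  classical
  rw [l1]
  exact Finset.sum_subset hs fun x _ hx => by
    rw [Finsupp.notMem_support_iff.mp hx, abs_zero]

lemma l1_zero {α : Type*} : l1 (0 : α →₀ ℝ) = 0 := by simp [l1]

lemma l1_add {α : Type*} (f g : α →₀ ℝ) : l1 (f + g) ≤ l1 f + l1 g := by
  classical
  rw [l1_eq_sum (f + g) (Finsupp.support_add), l1_eq_sum f (Finset.subset_union_left),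
    l1_eq_sum g (Finset.subset_union_right), ← Finset.sum_add_distrib]
  refine Finset.sum_le_sum fun x _ => ?_
  rw [Finsupp.add_apply]
  exact abs_add_le _ _

lemma l1_smul {α : Type*} (r : ℝ) (f : α →₀ ℝ) : l1 (r • f) ≤ |r| * l1 f := by
  classical
  rw [l1_eq_sum (r • f) Finsupp.support_smul, l1, Finset.mul_sum]
  refine Finset.sum_le_sum fun x _ => ?_
  rw [Finsupp.smul_apply, smul_eq_mul, abs_mul]

lemma l1_sum_le {α β : Type*} (s : Finset β) (h : β → α →₀ ℝ) :
    l1 (∑ i ∈ s, h i) ≤ ∑ i ∈ s, l1 (h i) := by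
  classical
  induction s using Finset.cons_induction with
  | empty => simp [l1_zero]
  | cons a s ha ih =>
    rw [Finset.sum_cons, Finset.sum_cons]
    exact le_trans (l1_add _ _) (by linarith)

lemma l1_single_one {α : Type*} (y : α) : l1 (Finsupp.single y (1 : ℝ)) = 1 := by
  classical
  rw [l1, Finsupp.support_single_ne_zero y one_ne_zero]
  simp

/-! ### symmetric sums -/

lemma half_sum {M : Type*} [AddCommMonoid M] {m : ℕ} (H : Fin m → Fin m → M)
    (hH : ∀ i j, H i j = H j i) :
    (∑ i, ∑ j, if i ≤ j then H i j else 0) + (∑ i, ∑ j, if i ≤ j then H i j else 0)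
      = (∑ i, ∑ j, H i j) + ∑ i, H i i := by
  have hBA : (∑ i : Fin m, ∑ j : Fin m, if j ≤ i then H i j else 0)
      = ∑ i : Fin m, ∑ j : Fin m, if i ≤ j then H i j else 0 := by
    rw [Finset.sum_comm]
    refine Finset.sum_congr rfl fun a _ => Finset.sum_congr rfl fun b _ => ?_
    rw [hH]
  calc (∑ i, ∑ j, if i ≤ j then H i j else 0) + (∑ i, ∑ j, if i ≤ j then H i j else 0)
      = (∑ i, ∑ j, if i ≤ j then H i j else 0)
        + ∑ i : Fin m, ∑ j : Fin m, if j ≤ i then H i j else 0 := by rw [hBA]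
    _ = ∑ i : Fin m, ∑ j : Fin m,
          ((if i ≤ j then H i j else 0) + if j ≤ i then H i j else 0) := by
        rw [← Finset.sum_add_distrib]
        refine Finset.sum_congr rfl fun i _ => ?_
        rw [← Finset.sum_add_distrib]
    _ = ∑ i : Fin m, ∑ j : Fin m, (H i j + if i = j then H i j else 0) := by
        refine Finset.sum_congr rfl fun i _ => Finset.sum_congr rfl fun j _ => ?_
        by_cases h1 : i ≤ j <;> by_cases h2 : j ≤ i
        · have : i = j := le_antisymm h1 h2
          simp [this]
        · have : i ≠ j := fun h => h2 (h ▸ le_refl _)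
          simp [h1, h2, this]
        · have : i ≠ j := fun h => h1 (h ▸ le_refl _)
          simp [h1, h2, this]
        · exact absurd (le_total i j) (by simp [h1, h2])
    _ = (∑ i, ∑ j, H i j) + ∑ i, H i i := by
        rw [← Finset.sum_add_distrib]
        refine Finset.sum_congr rfl fun i _ => ?_
        rw [Finset.sum_add_distrib]
        congr 1
        simp

lemma symm_sum_perm {M : Type*} [AddCommGroup M] [Module ℝ M] {m : ℕ}
    (F : Fin m → Fin m → M) (hF : ∀ i j, F i j = F j i) (σ : Equiv.Perm (Fin m)) :
    (∑ i, ∑ j, if i ≤ j then F (σ i) (σ j) else 0)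
      = ∑ i, ∑ j, if i ≤ j then F i j else 0 := by
  have h1 := half_sum F hF
  have h2 := half_sum (fun i j => F (σ i) (σ j)) (fun i j => hF _ _)
  have hS : (∑ i, ∑ j, F (σ i) (σ j)) = ∑ i : Fin m, ∑ j : Fin m, F i j := by
    rw [Equiv.sum_comp σ (fun i => ∑ j, F i (σ j))]
    exact Finset.sum_congr rfl fun i _ => Equiv.sum_comp σ (fun j => F i j)
  have hD : (∑ i, F (σ i) (σ i)) = ∑ i : Fin m, F i i := Equiv.sum_comp σ (fun i => F i i)
  rw [hS, hD] at h2
  set A := ∑ i : Fin m, ∑ j : Fin m, if i ≤ j then F i j else 0 with hA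
  set A' := ∑ i : Fin m, ∑ j : Fin m, if i ≤ j then F (σ i) (σ j) else 0 with hA'
  have key : (2 : ℝ) • A' = (2 : ℝ) • A := by
    rw [two_smul, two_smul, h1, h2]
  calc A' = (2⁻¹ : ℝ) • ((2 : ℝ) • A') := by rw [smul_smul]; norm_num
    _ = (2⁻¹ : ℝ) • ((2 : ℝ) • A) := by rw [key]
    _ = A := by rw [smul_smul]; norm_num



variable {n : ℕ}

/-- The finsupp-level lift of `phiTuple` on a tuple. -/
noncomputable def Ttup (proj : V → V → V → V) (x : Fin (n + 1) → V) :
    (Fin (n + 1) → V) →₀ ℝ :=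
  ∑ i : Fin (n + 1), ∑ j : Fin (n + 1),
    if i ≤ j then Finsupp.single (fun k => proj (x i) (x j) (x k)) (1 : ℝ) else 0

lemma mk_Ttup (proj : V → V → V → V) (x : Fin (n + 1) → V) :
    (Submodule.Quotient.mk (Ttup proj x) : AltChain V ℝ n) = phiTuple proj x := by
  rw [← Submodule.mkQ_apply, Ttup, map_sum, phiTuple]
  refine Finset.sum_congr rfl fun i _ => ?_
  rw [map_sum]
  refine Finset.sum_congr rfl fun j _ => ?_
  by_cases h : i ≤ j <;> simp [h, chainOf, Submodule.mkQ_apply]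

lemma perm_chain (y : Fin (n + 1) → V) (σ : Equiv.Perm (Fin (n + 1))) :
    chainOf (R := ℝ) (y ∘ σ) = ((Equiv.Perm.sign σ : ℤ) : ℝ) • chainOf y := by
  set s : ℝ := ((Equiv.Perm.sign σ : ℤ) : ℝ) with hs
  have hss : s * s = 1 := by
    rcases Int.units_eq_one_or (Equiv.Perm.sign σ) with h | h <;> rw [hs, h] <;> norm_num
  have hmem : Finsupp.single y 1 - s • Finsupp.single (y ∘ σ) 1 ∈ altRel V ℝ n :=
    Submodule.subset_span ⟨y, σ, rfl⟩
  have h0 : (Submodule.Quotient.mk (Finsupp.single y 1 - s • Finsupp.single (y ∘ σ) 1) :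
      AltChain V ℝ n) = 0 := (Submodule.Quotient.mk_eq_zero _).mpr hmem
  rw [← Submodule.mkQ_apply, map_sub, map_smul, sub_eq_zero] at h0
  have h1 : chainOf (R := ℝ) y = s • chainOf (y ∘ σ) := h0
  calc chainOf (R := ℝ) (y ∘ σ) = (s * s) • chainOf (y ∘ σ) := by rw [hss, one_smul]
    _ = s • (s • chainOf (y ∘ σ)) := by rw [smul_smul]
    _ = s • chainOf y := by rw [← h1]

lemma phi_perm (proj : V → V → V → V) (hsymm : ∀ a b v : V, proj a b v = proj b a v)
    (x : Fin (n + 1) → V) (σ : Equiv.Perm (Fin (n + 1))) :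
    phiTuple (R := ℝ) proj x = ((Equiv.Perm.sign σ : ℤ) : ℝ) • phiTuple proj (x ∘ σ) := by
  set s : ℝ := ((Equiv.Perm.sign σ : ℤ) : ℝ) with hs
  have hss : s * s = 1 := by
    rcases Int.units_eq_one_or (Equiv.Perm.sign σ) with h | h <;> rw [hs, h] <;> norm_num
  set F : Fin (n + 1) → Fin (n + 1) → AltChain V ℝ n :=
    fun i j => chainOf (fun k => proj (x i) (x j) (x k)) with hF
  have hFsymm : ∀ i j, F i j = F j i := by
    intro i j
    show chainOf (R := ℝ) (fun k => proj (x i) (x j) (x k))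
      = chainOf (fun k => proj (x j) (x i) (x k))
    have he : (fun k => proj (x i) (x j) (x k)) = fun k => proj (x j) (x i) (x k) :=
      funext fun k => hsymm _ _ _
    rw [he]
  have hstep : phiTuple (R := ℝ) proj (x ∘ σ) = s • ∑ i, ∑ j,
      if i ≤ j then F (σ i) (σ j) else 0 := by
    rw [phiTuple, Finset.smul_sum]
    refine Finset.sum_congr rfl fun i _ => ?_
    rw [Finset.smul_sum]
    refine Finset.sum_congr rfl fun j _ => ?_
    by_cases h : i ≤ j
    · rw [if_pos h, if_pos h]
      have : (fun k => proj ((x ∘ σ) i) ((x ∘ σ) j) ((x ∘ σ) k))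
          = (fun k => proj (x (σ i)) (x (σ j)) (x k)) ∘ σ := rfl
      rw [this, perm_chain, hF]
    · rw [if_neg h, if_neg h, smul_zero]
  rw [hstep, smul_smul, hss, one_smul, symm_sum_perm F hFsymm σ, phiTuple]

/-- The finsupp-level linear map lifting `Ttup`. -/
noncomputable def psiMap (proj : V → V → V → V) :
    ((Fin (n + 1) → V) →₀ ℝ) →ₗ[ℝ] ((Fin (n + 1) → V) →₀ ℝ) :=
  Finsupp.lsum ℝ (fun x => LinearMap.toSpanSingleton ℝ _ (Ttup proj x))

lemma psiMap_single (proj : V → V → V → V) (x : Fin (n + 1) → V) (r : ℝ) :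
    psiMap proj (Finsupp.single x r) = r • Ttup proj x := by
  rw [psiMap, Finsupp.lsum_single]
  rfl


lemma count_pairs (n : ℕ) :
    (∑ i : Fin (n + 1), ∑ j : Fin (n + 1), if i ≤ j then (1 : ℝ) else 0)
      = ((n + 1) * (n + 2) / 2 : ℝ) := by
  have h := half_sum (M := ℝ) (m := n + 1) (fun _ _ => (1 : ℝ)) (fun _ _ => rfl)
  have hs1 : (∑ _i : Fin (n + 1), (1 : ℝ)) = (n + 1 : ℝ) := by simp
  have hs2 : (∑ _i : Fin (n + 1), ∑ _j : Fin (n + 1), (1 : ℝ))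
      = ((n + 1 : ℝ)) * ((n + 1 : ℝ)) := by
    simp [Finset.sum_const]
    ring
  rw [hs2, hs1] at h
  nlinarith [h]

lemma l1_Ttup (proj : V → V → V → V) (x : Fin (n + 1) → V) :
    l1 (Ttup proj x) ≤ ((n + 1) * (n + 2) / 2 : ℝ) := by
  classical
  calc l1 (Ttup proj x)
      ≤ ∑ i : Fin (n + 1), l1 (∑ j : Fin (n + 1),
          if i ≤ j then Finsupp.single (fun k => proj (x i) (x j) (x k)) (1 : ℝ) else 0) :=
        l1_sum_le _ _
    _ ≤ ∑ i : Fin (n + 1), ∑ j : Fin (n + 1),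
          l1 (if i ≤ j then Finsupp.single (fun k => proj (x i) (x j) (x k)) (1 : ℝ) else 0) :=
        Finset.sum_le_sum fun i _ => l1_sum_le _ _
    _ = ∑ i : Fin (n + 1), ∑ j : Fin (n + 1), if i ≤ j then (1 : ℝ) else 0 := by
        refine Finset.sum_congr rfl fun i _ => Finset.sum_congr rfl fun j _ => ?_
        by_cases h : i ≤ j <;> simp [h, l1_single_one, l1_zero]
    _ = ((n + 1) * (n + 2) / 2 : ℝ) := count_pairs n

lemma l1_psiMap (proj : V → V → V → V) (f : (Fin (n + 1) → V) →₀ ℝ) :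
    l1 (psiMap proj f) ≤ ((n + 1) * (n + 2) / 2 : ℝ) * l1 f := by
  classical
  have hrep : psiMap proj f = ∑ x ∈ f.support, f x • Ttup proj x := by
    rw [psiMap, Finsupp.lsum_apply]
    rfl
  calc l1 (psiMap proj f) ≤ ∑ x ∈ f.support, l1 (f x • Ttup proj x) := by
        rw [hrep]; exact l1_sum_le _ _
    _ ≤ ∑ x ∈ f.support, |f x| * ((n + 1) * (n + 2) / 2 : ℝ) := by
        refine Finset.sum_le_sum fun x _ => ?_
        exact le_trans (l1_smul _ _)
          (mul_le_mul_of_nonneg_left (l1_Ttup proj x) (abs_nonneg _))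
    _ = ((n + 1) * (n + 2) / 2 : ℝ) * l1 f := by
        rw [← Finset.sum_mul, mul_comm]
        rfl

end S3

/-- The map `φ_n` extends to a bounded linear operator
`C_n(T,ℝ) → A_n(T,ℝ)` for the ℓ¹-quotient norms, of operator norm at most
`(n+1)(n+2)/2`. -/
theorem statement3 (G : SimpleGraph V) (hT : G.IsTree)
    (proj : V → V → V → V) (hproj : IsProj G proj) (n : ℕ) :
    ∃ φ : AltChain V ℝ n →ₗ[ℝ] AltChain V ℝ n,
      (∀ x : Fin (n + 1) → V, φ (chainOf x) = phiTuple proj x) ∧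
      (∀ c : AltChain V ℝ n, φ c ∈ alignedSub G ℝ n) ∧
      ∀ c : AltChain V ℝ n, cnorm (φ c) ≤ ((n + 1) * (n + 2) / 2 : ℝ) * cnorm c := by
  classical
  have hsymm : ∀ a b v : V, proj a b v = proj b a v := fun a b v => S3.proj_symm hT hproj a b v
  set K : ℝ := ((n + 1) * (n + 2) / 2 : ℝ) with hK
  set Ψ : ((Fin (n + 1) → V) →₀ ℝ) →ₗ[ℝ] AltChain V ℝ n :=
    (altRel V ℝ n).mkQ.comp (S3.psiMap proj) with hΨ
  have hΨsingle : ∀ (x : Fin (n + 1) → V) (r : ℝ),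
      Ψ (Finsupp.single x r) = r • phiTuple proj x := by
    intro x r
    show (altRel V ℝ n).mkQ (S3.psiMap proj (Finsupp.single x r)) = _
    rw [S3.psiMap_single, map_smul, Submodule.mkQ_apply, S3.mk_Ttup]
  have hker : altRel V ℝ n ≤ LinearMap.ker Ψ := by
    refine Submodule.span_le.mpr ?_
    rintro f ⟨x, σ, rfl⟩
    simp only [SetLike.mem_coe, LinearMap.mem_ker, map_sub, map_smul]
    rw [hΨsingle, hΨsingle, one_smul, one_smul, sub_eq_zero]
    exact S3.phi_perm proj hsymm x σ
  set φ : AltChain V ℝ n →ₗ[ℝ] AltChain V ℝ n := (altRel V ℝ n).liftQ Ψ hker with hφ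
  have hφmk : ∀ f : (Fin (n + 1) → V) →₀ ℝ,
      φ (Submodule.Quotient.mk f) = Submodule.Quotient.mk (S3.psiMap proj f) := by
    intro f
    rw [hφ, Submodule.liftQ_apply]
    rfl
  have prop1 : ∀ x : Fin (n + 1) → V, φ (chainOf x) = phiTuple proj x := by
    intro x
    rw [chainOf, hφmk, S3.psiMap_single, one_smul, S3.mk_Ttup]
  refine ⟨φ, prop1, ?_, ?_⟩
  · intro c
    obtain ⟨f, rfl⟩ := Submodule.Quotient.mk_surjective (altRel V ℝ n) c
    rw [hφmk]
    induction f using Finsupp.induction_linear with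
    | zero => simp only [map_zero, Submodule.Quotient.mk_zero]; exact Submodule.zero_mem _
    | add f g hf hg =>
      have : (Submodule.Quotient.mk (S3.psiMap proj (f + g)) : AltChain V ℝ n)
          = Submodule.Quotient.mk (S3.psiMap proj f)
            + Submodule.Quotient.mk (S3.psiMap proj g) := by
        rw [map_add]; rfl
      rw [this]
      exact add_mem hf hg
    | single x r =>
      have h1 : (Submodule.Quotient.mk (S3.psiMap proj (Finsupp.single x r)) :
          AltChain V ℝ n) = r • phiTuple proj x := by
        rw [S3.psiMap_single, ← Submodule.mkQ_apply, map_smul, Submodule.mkQ_apply, S3.mk_Ttup]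
      rw [h1]
      refine Submodule.smul_mem _ _ ?_
      rw [phiTuple]
      refine Submodule.sum_mem _ fun i _ => Submodule.sum_mem _ fun j _ => ?_
      by_cases h : i ≤ j
      · rw [if_pos h]
        exact Submodule.subset_span
          ⟨_, ⟨x i, x j, fun k => (hproj (x i) (x j) (x k)).1⟩, rfl⟩
      · rw [if_neg h]
        exact Submodule.zero_mem _
  · intro c
    have hKpos : (0 : ℝ) < K := by rw [hK]; positivity
    have hbdd : ∀ d : AltChain V ℝ n, BddBelow {r : ℝ | ∃ f : (Fin (n + 1) → V) →₀ ℝ,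
        (Submodule.Quotient.mk f : AltChain V ℝ n) = d ∧ r = ∑ x ∈ f.support, |f x|} := by
      intro d
      refine ⟨0, ?_⟩
      rintro r ⟨f, -, rfl⟩
      exact S3.l1_nonneg f
    have hcnorm_le : ∀ f : (Fin (n + 1) → V) →₀ ℝ,
        cnorm (Submodule.Quotient.mk f : AltChain V ℝ n) ≤ S3.l1 f := by
      intro f
      exact csInf_le (hbdd _) ⟨f, rfl, rfl⟩
    have key : ∀ r ∈ {r : ℝ | ∃ f : (Fin (n + 1) → V) →₀ ℝ,
        (Submodule.Quotient.mk f : AltChain V ℝ n) = c ∧ r = ∑ x ∈ f.support, |f x|},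
        cnorm (φ c) ≤ K * r := by
      rintro r ⟨f, hf, rfl⟩
      have h1 : φ c = Submodule.Quotient.mk (S3.psiMap proj f) := by
        rw [← hf, hφmk]
      calc cnorm (φ c) ≤ S3.l1 (S3.psiMap proj f) := h1 ▸ hcnorm_le _
        _ ≤ K * S3.l1 f := S3.l1_psiMap proj f
    obtain ⟨f₀, hf₀⟩ := Submodule.Quotient.mk_surjective (altRel V ℝ n) c
    have hne : Set.Nonempty {r : ℝ | ∃ f : (Fin (n + 1) → V) →₀ ℝ,
        (Submodule.Quotient.mk f : AltChain V ℝ n) = c ∧ r = ∑ x ∈ f.support, |f x|} :=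
      ⟨S3.l1 f₀, f₀, hf₀, rfl⟩
    have h2 : cnorm (φ c) / K ≤ cnorm c := by
      rw [cnorm]
      refine le_csInf hne fun r hr => ?_
      rw [div_le_iff₀ hKpos, mul_comm]
      exact key r hr
    calc cnorm (φ c) = K * (cnorm (φ c) / K) := by field_simp
      _ ≤ K * cnorm c := mul_le_mul_of_nonneg_left h2 hKpos.le
end

section
/- Let T be a non-empty simplicial tree. The augmented complex 0 ← ℝ ←(ε)− A₀(T,ℝ) ←(∂)− A₁(T,ℝ) ←(∂)− A₂(T,ℝ) ← ⋯ admits a bounded contracting homotopy: there exist bounded linear maps s : ℝ → A₀(T,ℝ) and h_n : A_n(T,ℝ) → A_{n+1}(T,ℝ) (n ≥ 0) such that ε∘s = id_ℝ, ∂∘h₀ + s∘ε = id on A₀(T,ℝ), and ∂∘h_n + h_{n−1}∘∂ = id on A_n(T,ℝ) for all n ≥ 1. -/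
/-!
Common definitions: trees are modelled as simple graphs `G` on a vertex type `V`
satisfying `G.IsTree`; `Seg G a b` is the geodesic segment `[a,b]` (the set of
vertices lying on the geodesic from `a` to `b`); `Aligned` tuples are those
contained in some geodesic segment; `AltChain V R n` is the module `C_n(T,R)` of
alternating `n`-chains; `chainOf x` is the class of a tuple; `alignedSub G R n`
is `A_n(T,R)`; `cnorm` is the ℓ¹-quotient norm.
-/

open Finsupp

variable {V : Type*}

/-! ### sign values -/

theorem sign_val_sq (σ : Equiv.Perm (Fin (n + 1))) :
    ((Equiv.Perm.sign σ : ℤ) : ℝ) * ((Equiv.Perm.sign σ : ℤ) : ℝ) = 1 := by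
  rcases Int.units_eq_one_or (Equiv.Perm.sign σ) with h | h <;> rw [h] <;> norm_num

/-! ### chainOf lemmas -/

theorem span_chainOf (n : ℕ) :
    Submodule.span ℝ (Set.range (chainOf (V := V) (R := ℝ) (n := n))) = ⊤ := by
  rw [Submodule.eq_top_iff']
  intro c
  obtain ⟨f, rfl⟩ := Submodule.Quotient.mk_surjective _ c
  induction f using Finsupp.induction with
  | zero => simp
  | single_add a r f _ _ ih =>
      rw [Submodule.Quotient.mk_add]
      refine Submodule.add_mem _ ?_ ih
      have : (Submodule.Quotient.mk (Finsupp.single a r) : AltChain V ℝ n)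
          = r • chainOf a := by
        rw [chainOf, ← Submodule.Quotient.mk_smul, Finsupp.smul_single, smul_eq_mul, mul_one]
      rw [this]
      exact Submodule.smul_mem _ _ (Submodule.subset_span ⟨a, rfl⟩)

theorem altchain_ext {n : ℕ} {M : Type*} [AddCommGroup M] [Module ℝ M]
    (f g : AltChain V ℝ n →ₗ[ℝ] M)
    (h : ∀ x : Fin (n + 1) → V, f (chainOf x) = g (chainOf x)) : f = g := by
  refine LinearMap.ext_on (span_chainOf n) ?_
  rintro c ⟨x, rfl⟩
  exact h x

theorem chainOf_perm {n : ℕ} (x : Fin (n + 1) → V) (σ : Equiv.Perm (Fin (n + 1))) :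
    chainOf (R := ℝ) (x ∘ σ) = ((Equiv.Perm.sign σ : ℤ) : ℝ) • chainOf x := by
  have hrel : (Finsupp.single x 1 - ((Equiv.Perm.sign σ : ℤ) : ℝ) • Finsupp.single (x ∘ σ) 1)
      ∈ altRel V ℝ n := Submodule.subset_span ⟨x, σ, rfl⟩
  have h0 : chainOf (R := ℝ) x - ((Equiv.Perm.sign σ : ℤ) : ℝ) • chainOf (R := ℝ) (x ∘ σ) = 0 := by
    rw [chainOf, chainOf, ← Submodule.Quotient.mk_smul, ← Submodule.Quotient.mk_sub]
    exact (Submodule.Quotient.mk_eq_zero _).2 hrel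
  have h1 : chainOf (R := ℝ) x = ((Equiv.Perm.sign σ : ℤ) : ℝ) • chainOf (R := ℝ) (x ∘ σ) := by
    have := sub_eq_zero.1 h0; exact this
  calc chainOf (R := ℝ) (x ∘ σ)
      = (((Equiv.Perm.sign σ : ℤ) : ℝ) * ((Equiv.Perm.sign σ : ℤ) : ℝ)) • chainOf (R := ℝ) (x ∘ σ) := by
        rw [sign_val_sq, one_smul]
    _ = ((Equiv.Perm.sign σ : ℤ) : ℝ) • chainOf x := by
        rw [mul_smul, ← h1]

theorem chainOf_degenerate {n : ℕ} (x : Fin (n + 1) → V) {i j : Fin (n + 1)}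
    (hij : i ≠ j) (hx : x i = x j) : chainOf (R := ℝ) x = 0 := by
  have h := chainOf_perm x (Equiv.swap i j)
  have hxs : x ∘ (Equiv.swap i j) = x := by
    funext k
    rcases eq_or_ne k i with rfl | hki
    · simp [Equiv.swap_apply_left, hx]
    rcases eq_or_ne k j with rfl | hkj
    · simp [Equiv.swap_apply_right, hx]
    · simp [Equiv.swap_apply_of_ne_of_ne hki hkj]
  rw [hxs, Equiv.Perm.sign_swap hij] at h
  push_cast at h
  have : (2 : ℝ) • chainOf (R := ℝ) x = 0 := by
    rw [two_smul]
    nth_rewrite 1 [h]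
    simp
  have h2 : (2 : ℝ) ≠ 0 := by norm_num
  calc chainOf (R := ℝ) x = (2 : ℝ)⁻¹ • ((2 : ℝ) • chainOf (R := ℝ) x) := by
        rw [smul_smul]; norm_num
    _ = 0 := by rw [this, smul_zero]

/-! ### extending a permutation by fixing 0 -/

theorem cons_comp_ext {n : ℕ} (a : V) (x : Fin (n + 1) → V) (σ : Equiv.Perm (Fin (n + 1))) :
    Fin.cons a (x ∘ σ) =
      (Fin.cons a x : Fin (n + 2) → V) ∘ (Equiv.Perm.decomposeFin.symm (0, σ)) := by
  funext k
  induction k using Fin.cases with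
  | zero => simp
  | succ i => simp

theorem sign_ext {n : ℕ} (σ : Equiv.Perm (Fin (n + 1))) :
    Equiv.Perm.sign (Equiv.Perm.decomposeFin.symm (0, σ)) = Equiv.Perm.sign σ := by
  simp

/-! ### the cone map -/

noncomputable def coneF (a : V) (n : ℕ) :
    ((Fin (n + 1) → V) →₀ ℝ) →ₗ[ℝ] ((Fin (n + 2) → V) →₀ ℝ) :=
  Finsupp.lmapDomain ℝ ℝ (fun x => Fin.cons a x)

noncomputable def coneQ (a : V) {n : ℕ} : AltChain V ℝ n →ₗ[ℝ] AltChain V ℝ (n + 1) :=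
  Submodule.liftQ _ ((altRel V ℝ (n + 1)).mkQ.comp (coneF a n)) (by
    rw [altRel, Submodule.span_le]
    rintro f ⟨x, σ, rfl⟩
    simp only [SetLike.mem_coe, LinearMap.mem_ker, LinearMap.comp_apply, map_sub, map_smul]
    rw [coneF, Finsupp.lmapDomain_apply, Finsupp.lmapDomain_apply,
      Finsupp.mapDomain_single, Finsupp.mapDomain_single]
    have h1 : (Submodule.mkQ (altRel V ℝ (n+1))) (Finsupp.single (Fin.cons a x) 1)
        = chainOf (Fin.cons a x) := rfl
    have h2 : (Submodule.mkQ (altRel V ℝ (n+1))) (Finsupp.single (Fin.cons a (x ∘ σ)) 1)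
        = chainOf (Fin.cons a (x ∘ σ)) := rfl
    rw [h1, h2, cons_comp_ext, chainOf_perm, sign_ext]
    rw [smul_smul, sign_val_sq, one_smul, sub_self])

theorem coneQ_chainOf (a : V) {n : ℕ} (x : Fin (n + 1) → V) :
    coneQ a (chainOf (R := ℝ) x) = chainOf (Fin.cons a x) := by
  rw [chainOf, coneQ, Submodule.liftQ_apply, LinearMap.comp_apply, coneF,
    Finsupp.lmapDomain_apply, Finsupp.mapDomain_single]
  rfl

theorem coneQ_mk (a : V) {n : ℕ} (f : (Fin (n + 1) → V) →₀ ℝ) :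
    coneQ a (Submodule.Quotient.mk f) =
      Submodule.Quotient.mk (Finsupp.mapDomain (fun x => Fin.cons a x) f) := by
  rw [coneQ, Submodule.liftQ_apply, LinearMap.comp_apply, coneF, Finsupp.lmapDomain_apply,
    Submodule.mkQ_apply]

/-! ### Fin lemmas -/

theorem succAbove_comm {n : ℕ} (i j : Fin (n + 2)) (h : (i : ℕ) ≤ (j : ℕ)) (t : Fin (n + 1)) :
    (Fin.succAbove i.castSucc) (j.succAbove t) = (Fin.succAbove j.succ) (i.succAbove t) := by
  apply Fin.val_injective
  simp only [Fin.succAbove, Fin.lt_def, Fin.coe_castSucc, Fin.val_succ, apply_ite Fin.val]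
  split_ifs <;> simp_all <;> omega

theorem cons_comp_succAbove_zero {n : ℕ} (a : V) (y : Fin (n + 1) → V) :
    (Fin.cons a y : Fin (n + 2) → V) ∘ Fin.succAbove 0 = y := by
  funext t; simp [Fin.succAbove_zero]

theorem cons_comp_succAbove_succ {n : ℕ} (a : V) (y : Fin (n + 1) → V) (k : Fin (n + 1)) :
    (Fin.cons a y : Fin (n + 2) → V) ∘ Fin.succAbove k.succ = Fin.cons a (y ∘ Fin.succAbove k) := by
  funext t
  induction t using Fin.cases with
  | zero => simp
  | succ i => simp [Fin.succ_succAbove_succ]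

section Bnd

variable (bnd : ∀ n : ℕ, AltChain V ℝ (n + 1) →ₗ[ℝ] AltChain V ℝ n)
variable (hbnd : ∀ (n : ℕ) (y : Fin (n + 2) → V),
      bnd n (chainOf y) =
        ∑ j : Fin (n + 2), ((-1 : ℝ) ^ (j : ℕ)) • chainOf (y ∘ Fin.succAbove j))

include hbnd

theorem bnd_coneQ {n : ℕ} (a : V) (c : AltChain V ℝ (n + 1)) :
    bnd (n + 1) (coneQ a c) = c - coneQ a (bnd n c) := by
  have : (bnd (n + 1)).comp (coneQ a) =
      LinearMap.id - (coneQ a).comp (bnd n) := by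
    apply altchain_ext
    intro y
    simp only [LinearMap.comp_apply, LinearMap.sub_apply, LinearMap.id_apply]
    rw [coneQ_chainOf, hbnd (n + 1) (Fin.cons a y), Fin.sum_univ_succ]
    rw [cons_comp_succAbove_zero]
    simp only [Fin.val_zero, pow_zero, one_smul, Fin.val_succ]
    have hterm : ∀ k : Fin (n + 2),
        ((-1 : ℝ) ^ ((k : ℕ) + 1)) • chainOf ((Fin.cons a y : Fin (n+3) → V) ∘ Fin.succAbove k.succ)
        = -(((-1 : ℝ) ^ (k : ℕ)) • coneQ a (chainOf (y ∘ Fin.succAbove k))) := by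
      intro k
      rw [cons_comp_succAbove_succ, coneQ_chainOf, pow_succ, mul_comm, neg_one_mul, neg_smul]
    rw [Finset.sum_congr rfl (fun k _ => hterm k), Finset.sum_neg_distrib]
    rw [hbnd n y, map_sum]
    simp only [map_smul]
    abel
  have := LinearMap.congr_fun this c
  simpa using this

theorem bnd_bnd {n : ℕ} (c : AltChain V ℝ (n + 2)) : bnd n (bnd (n + 1) c) = 0 := by
  have : (bnd n).comp (bnd (n + 1)) = (0 : AltChain V ℝ (n+2) →ₗ[ℝ] AltChain V ℝ n) := by
    apply altchain_ext
    intro y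
    simp only [LinearMap.comp_apply, LinearMap.zero_apply]
    rw [hbnd (n + 1) y, map_sum]
    simp only [map_smul, hbnd n, Finset.smul_sum, smul_smul]
    rw [← Finset.sum_product']
    have key : ∀ (i j : Fin (n + 2)), (i : ℕ) ≤ (j : ℕ) →
        ((y ∘ (i.castSucc).succAbove) ∘ j.succAbove : Fin (n+1) → V) =
          (y ∘ (j.succ).succAbove) ∘ i.succAbove := by
      intro i j h
      funext t
      exact congrArg y (succAbove_comm i j h t)
    refine Finset.sum_ninvolution
      (fun a => if h : (a.1 : ℕ) ≤ (a.2 : ℕ)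
        then ((⟨(a.2 : ℕ) + 1, by omega⟩ : Fin (n + 3)), (⟨(a.1 : ℕ) % (n + 2), Nat.mod_lt _ (by omega)⟩ : Fin (n + 2)))
        else ((⟨(a.2 : ℕ), by omega⟩ : Fin (n + 3)), (⟨(a.1 : ℕ) - 1, by omega⟩ : Fin (n + 2))))
      ?_ ?_ (fun a => Finset.mem_univ _) ?_
    · rintro ⟨J, K⟩
      by_cases h : (J : ℕ) ≤ (K : ℕ)
      · simp only [dif_pos h]
        have hJK : (J : ℕ) < n + 2 := by omega
        have hmod : (J : ℕ) % (n + 2) = (J : ℕ) := Nat.mod_eq_of_lt hJK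
        set i : Fin (n + 2) := ⟨(J : ℕ), hJK⟩ with hi
        have hJ : J = i.castSucc := by apply Fin.val_injective; rfl
        have hK1 : (⟨(K : ℕ) + 1, by omega⟩ : Fin (n + 3)) = K.succ := by
          apply Fin.val_injective; rfl
        have hK2 : (⟨(J : ℕ) % (n + 2), by omega⟩ : Fin (n + 2)) = i := by
          apply Fin.val_injective; exact hmod
        rw [hK1, hK2]
        have hfun : ((y ∘ J.succAbove) ∘ K.succAbove : Fin (n+1) → V)
            = (y ∘ (K.succ).succAbove) ∘ i.succAbove := by
          rw [hJ]; exact key i K h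
        rw [hfun, ← add_smul]
        convert zero_smul ℝ _
        rw [hmod, pow_succ]
        ring
      · simp only [dif_neg h]
        push_neg at h
        set i : Fin (n + 2) := ⟨(K : ℕ), by omega⟩ with hi
        set j : Fin (n + 2) := ⟨(J : ℕ) - 1, by omega⟩ with hj
        have h1 : (i : ℕ) ≤ (j : ℕ) := by simp [hi, hj]; omega
        have key2 := key i j h1
        have hA : (⟨(K : ℕ), by omega⟩ : Fin (n + 3)) = i.castSucc := by
          apply Fin.val_injective; rfl
        have hB : j.succ = J := by
          apply Fin.val_injective; simp [hj]; omega
        have hC : i = K := by apply Fin.val_injective; rfl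
        rw [hB, hC] at key2
        rw [hA, hC, key2, ← add_smul]
        convert zero_smul ℝ _
        show (-1 : ℝ) ^ (J : ℕ) * (-1 : ℝ) ^ (K : ℕ)
            + (-1 : ℝ) ^ (K : ℕ) * (-1 : ℝ) ^ ((J : ℕ) - 1) = 0
        have hj1 : (J : ℕ) = ((J : ℕ) - 1) + 1 := by omega
        nth_rewrite 1 [hj1]
        rw [pow_succ]
        ring
    · rintro ⟨J, K⟩ -
      intro hcon
      dsimp only at hcon
      by_cases h : (J : ℕ) ≤ (K : ℕ)
      · rw [dif_pos h] at hcon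
        have := congrArg (fun z => ((Prod.fst z : Fin (n + 3)) : ℕ)) hcon
        dsimp at this
        omega
      · rw [dif_neg h] at hcon
        have := congrArg (fun z => ((Prod.fst z : Fin (n + 3)) : ℕ)) hcon
        dsimp at this
        omega
    · rintro ⟨J, K⟩
      dsimp only
      by_cases h : (J : ℕ) ≤ (K : ℕ)
      · rw [dif_pos h]
        have h2 : ¬ ((K : ℕ) + 1 ≤ (J : ℕ) % (n + 2)) := by
          have : (J : ℕ) % (n + 2) ≤ (J : ℕ) := Nat.mod_le _ _
          omega
        rw [dif_neg (by simpa using h2)]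
        refine Prod.ext ?_ ?_ <;> apply Fin.val_injective <;> simp <;> omega
      · rw [dif_neg h]
        push_neg at h
        have h2 : (K : ℕ) ≤ (J : ℕ) - 1 := by omega
        rw [dif_pos (by simpa using h2)]
        refine Prod.ext ?_ ?_ <;> apply Fin.val_injective <;> simp <;> omega
  have := LinearMap.congr_fun this c
  simpa using this

end Bnd

namespace TreeGeo

variable {G : SimpleGraph V} [DecidableEq V]

theorem eq_of_dist_eq_zero (hc : G.Connected) {u v : V} (h : G.dist u v = 0) : u = v :=
  (hc.dist_eq_zero_iff).1 h

/-- any path in a tree realizes the distance -/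
theorem path_length_eq_dist (hT : G.IsTree) {a b : V} (w : G.Walk a b) (hw : w.IsPath) :
    w.length = G.dist a b := by
  obtain ⟨w₀, hw₀⟩ := hT.isConnected.exists_walk_length_eq_dist a b
  have hbp : w₀.bypass.IsPath := SimpleGraph.Walk.bypass_isPath w₀
  have h1 : w₀.bypass.length ≤ G.dist a b := hw₀ ▸ SimpleGraph.Walk.length_bypass_le w₀
  have h2 : G.dist a b ≤ w₀.bypass.length := SimpleGraph.dist_le _
  have heq : w = w₀.bypass := by
    have := hT.IsAcyclic.path_unique ⟨w, hw⟩ ⟨w₀.bypass, hbp⟩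
    exact congrArg Subtype.val this
  rw [heq]
  omega

theorem exists_path (hc : G.Connected) (a b : V) :
    ∃ w : G.Walk a b, w.IsPath ∧ w.length = G.dist a b := by
  obtain ⟨w₀, hw₀⟩ := hc.exists_walk_length_eq_dist a b
  refine ⟨w₀.bypass, SimpleGraph.Walk.bypass_isPath w₀, ?_⟩
  have h1 := SimpleGraph.Walk.length_bypass_le w₀
  have h2 : G.dist a b ≤ w₀.bypass.length := SimpleGraph.dist_le _
  omega

/-- splitting a geodesic at a support vertex -/
theorem split_dists (hT : G.IsTree) {a b : V} (w : G.Walk a b) (hw : w.IsPath)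
    {q : V} (hq : q ∈ w.support) :
    G.dist a q + G.dist q b = G.dist a b ∧
      (w.takeUntil q hq).length = G.dist a q ∧ (w.dropUntil q hq).length = G.dist q b := by
  classical
  have hlen : w.length = G.dist a b := path_length_eq_dist hT w hw
  have hsplit : (w.takeUntil q hq).append (w.dropUntil q hq) = w :=
    SimpleGraph.Walk.take_spec w hq
  have hlen2 : (w.takeUntil q hq).length + (w.dropUntil q hq).length = w.length := by
    conv_rhs => rw [← hsplit]
    rw [SimpleGraph.Walk.length_append]
  have h1 : G.dist a q ≤ (w.takeUntil q hq).length := SimpleGraph.dist_le _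
  have h2 : G.dist q b ≤ (w.dropUntil q hq).length := SimpleGraph.dist_le _
  have h3 : G.dist a b ≤ G.dist a q + G.dist q b := hT.isConnected.dist_triangle
  omega

theorem support_mem_seg (hT : G.IsTree) {a b : V} (w : G.Walk a b) (hw : w.IsPath)
    {q : V} (hq : q ∈ w.support) : q ∈ Seg G a b :=
  (split_dists hT w hw hq).1

/-- median: for any vertex p and any path from a to b, there is a vertex q on the path
which lies on all three geodesics. -/
theorem median (hT : G.IsTree) (p a b : V) (w : G.Walk a b) (hw : w.IsPath) :
    ∃ q, q ∈ w.support ∧ q ∈ Seg G p a ∧ q ∈ Seg G p b ∧ q ∈ Seg G a b := by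
  classical
  obtain ⟨w₁, hw₁, hl₁⟩ := exists_path hT.isConnected p a
  obtain ⟨w₂, hw₂, hl₂⟩ := exists_path hT.isConnected p b
  have hpne : (w₁.support.toFinset ∩ w₂.support.toFinset).Nonempty := by
    refine ⟨p, ?_⟩
    simp only [Finset.mem_inter, List.mem_toFinset]
    exact ⟨w₁.start_mem_support, w₂.start_mem_support⟩
  obtain ⟨q, hqmem, hqmax⟩ := Finset.exists_max_image _ (fun r => G.dist p r) hpne
  simp only [Finset.mem_inter, List.mem_toFinset] at hqmem
  obtain ⟨hq1, hq2⟩ := hqmem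
  have hd1 := split_dists hT w₁ hw₁ hq1
  have hd2 := split_dists hT w₂ hw₂ hq2
  set A := w₁.dropUntil q hq1 with hA
  set B := w₂.dropUntil q hq2 with hB
  have hAp : A.IsPath := hw₁.dropUntil hq1
  have hBp : B.IsPath := hw₂.dropUntil hq2
  -- supports of A and B intersect only in q
  have hcommon : ∀ r, r ∈ A.support → r ∈ B.support → r = q := by
    intro r hrA hrB
    have hrA' : r ∈ w₁.support := SimpleGraph.Walk.support_dropUntil_subset _ hq1 hrA
    have hrB' : r ∈ w₂.support := SimpleGraph.Walk.support_dropUntil_subset _ hq2 hrB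
    have hdA := split_dists hT A hAp hrA
    have hdB := split_dists hT B hBp hrB
    have hdr1 := split_dists hT w₁ hw₁ hrA'
    have hmax : G.dist p r ≤ G.dist p q := hqmax r (by
      simp only [Finset.mem_inter, List.mem_toFinset]; exact ⟨hrA', hrB'⟩)
    -- dist p r = dist p q + dist q r
    have h5 : G.dist p r + G.dist r a = G.dist p a := hdr1.1
    have h6 : G.dist q r + G.dist r a = G.dist q a := hdA.1
    have h7 : G.dist p q + G.dist q a = G.dist p a := hd1.1
    have h8 : G.dist p r ≤ G.dist p q + G.dist q r := hT.isConnected.dist_triangle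
    have h9 : G.dist q r = 0 := by omega
    exact (eq_of_dist_eq_zero hT.isConnected h9).symm
  -- the concatenated walk is a path
  have hW : (A.reverse.append B).IsPath := by
    rw [SimpleGraph.Walk.isPath_def, SimpleGraph.Walk.support_append,
      SimpleGraph.Walk.support_reverse]
    rw [List.nodup_append]
    refine ⟨List.nodup_reverse.2 ((SimpleGraph.Walk.isPath_def _).1 hAp), ?_, ?_⟩
    · have := (SimpleGraph.Walk.isPath_def _).1 hBp
      rw [SimpleGraph.Walk.support_eq_cons] at this
      exact this.of_cons
    · intro r hr1 r' hr2 hrr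
      rw [← hrr] at hr2
      have hrA : r ∈ A.support := List.mem_reverse.1 hr1
      have hrB : r ∈ B.support := by
        rw [SimpleGraph.Walk.support_eq_cons]; exact List.mem_cons_of_mem _ hr2
      have : r = q := hcommon r hrA hrB
      subst this
      have hnd := (SimpleGraph.Walk.isPath_def _).1 hBp
      rw [SimpleGraph.Walk.support_eq_cons] at hnd
      exact (List.nodup_cons.1 hnd).1 hr2
  have hlenW : (A.reverse.append B).length = G.dist q a + G.dist q b := by
    rw [SimpleGraph.Walk.length_append, SimpleGraph.Walk.length_reverse, hd1.2.2, hd2.2.2]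
  have hWd : (A.reverse.append B).length = G.dist a b := path_length_eq_dist hT _ hW
  refine ⟨q, ?_, ?_, ?_, ?_⟩
  · -- q ∈ w.support : the path A.reverse.append B equals w
    have := hT.IsAcyclic.path_unique ⟨A.reverse.append B, hW⟩ ⟨w, hw⟩
    have hval : A.reverse.append B = w := congrArg Subtype.val this
    rw [← hval]
    rw [SimpleGraph.Walk.mem_support_append_iff]
    right
    exact B.start_mem_support
  · exact hd1.1
  · exact hd2.1
  · show G.dist a q + G.dist q b = G.dist a b
    have hc : G.dist a q = G.dist q a := SimpleGraph.dist_comm ..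
    omega

theorem seg_mem_support (hT : G.IsTree) {a b v : V} (hv : v ∈ Seg G a b)
    (w : G.Walk a b) (hw : w.IsPath) : v ∈ w.support := by
  obtain ⟨q, hqs, hq1, hq2, _⟩ := median hT v a b w hw
  have h1 : G.dist v q + G.dist q a = G.dist v a := hq1
  have h2 : G.dist v q + G.dist q b = G.dist v b := hq2
  have h3 : G.dist a v + G.dist v b = G.dist a b := hv
  have h4 : G.dist a q + G.dist q b = G.dist a b := (split_dists hT w hw hqs).1
  have h5 : G.dist a v = G.dist v a := SimpleGraph.dist_comm ..
  have h6 : G.dist a q = G.dist q a := SimpleGraph.dist_comm ..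
  have h7 : G.dist v q = 0 := by omega
  have := eq_of_dist_eq_zero hT.isConnected h7
  subst this
  exact hqs

theorem seg_order (hT : G.IsTree) {a b a' b' : V} (ha' : a' ∈ Seg G a b)
    (hb' : b' ∈ Seg G a b) (hle : G.dist a a' ≤ G.dist a b') : a' ∈ Seg G a b' := by
  classical
  obtain ⟨w, hw, _⟩ := exists_path hT.isConnected a b
  have hb's : b' ∈ w.support := seg_mem_support hT hb' w hw
  have ha's : a' ∈ w.support := seg_mem_support hT ha' w hw
  have hsplit := SimpleGraph.Walk.take_spec w hb's
  have : a' ∈ (w.takeUntil b' hb's).support ∨ a' ∈ (w.dropUntil b' hb's).support := by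
    rw [← SimpleGraph.Walk.mem_support_append_iff, hsplit]; exact ha's
  rcases this with h | h
  · exact support_mem_seg hT _ (hw.takeUntil hb's) h
  · -- a' is on the geodesic from b' to b
    have hseg : a' ∈ Seg G b' b := support_mem_seg hT _ (hw.dropUntil hb's) h
    have h1 : G.dist a a' + G.dist a' b = G.dist a b := ha'
    have h2 : G.dist a b' + G.dist b' b = G.dist a b := hb'
    have h3 : G.dist b' a' + G.dist a' b = G.dist b' b := hseg
    have h4 : G.dist b' a' = 0 := by omega
    have : b' = a' := eq_of_dist_eq_zero hT.isConnected h4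
    subst this
    show G.dist a b' + G.dist b' b' = G.dist a b'
    simp [SimpleGraph.dist_self]
  
theorem seg_convex (hT : G.IsTree) {a b a' b' v : V} (ha' : a' ∈ Seg G a b)
    (hb' : b' ∈ Seg G a b) (hv : v ∈ Seg G a' b') : v ∈ Seg G a b := by
  -- wlog dist a a' ≤ dist a b'
  have main : ∀ a' b' : V, a' ∈ Seg G a b → b' ∈ Seg G a b →
      G.dist a a' ≤ G.dist a b' → v ∈ Seg G a' b' → v ∈ Seg G a b := by
    intro x y hx hy hle hvxy
    have hxy : x ∈ Seg G a y := seg_order hT hx hy hle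
    have h1 : G.dist a x + G.dist x y = G.dist a y := hxy
    have h2 : G.dist a y + G.dist y b = G.dist a b := hy
    have h3 : G.dist x v + G.dist v y = G.dist x y := hvxy
    have h4 : G.dist a v ≤ G.dist a x + G.dist x v := hT.isConnected.dist_triangle
    have h5 : G.dist v b ≤ G.dist v y + G.dist y b := hT.isConnected.dist_triangle
    have h6 : G.dist a b ≤ G.dist a v + G.dist v b := hT.isConnected.dist_triangle
    show G.dist a v + G.dist v b = G.dist a b
    omega
  rcases le_total (G.dist a a') (G.dist a b') with hle | hle
  · exact main a' b' ha' hb' hle hv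
  · refine main b' a' hb' ha' hle ?_
    show G.dist b' v + G.dist v a' = G.dist b' a'
    have h := hv
    have h1 : G.dist a' v + G.dist v b' = G.dist a' b' := hv
    have c1 : G.dist a' v = G.dist v a' := SimpleGraph.dist_comm ..
    have c2 : G.dist v b' = G.dist b' v := SimpleGraph.dist_comm ..
    have c3 : G.dist a' b' = G.dist b' a' := SimpleGraph.dist_comm ..
    omega

end TreeGeo


theorem median'' {G : SimpleGraph V} (hT : G.IsTree) (p a b : V) :
    ∃ q, q ∈ Seg G p a ∧ q ∈ Seg G p b ∧ q ∈ Seg G a b := by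
  classical
  obtain ⟨w, hw, -⟩ := TreeGeo.exists_path hT.isConnected a b
  obtain ⟨q, -, h1, h2, h3⟩ := TreeGeo.median hT p a b w hw
  exact ⟨q, h1, h2, h3⟩

theorem seg_convex'' {G : SimpleGraph V} (hT : G.IsTree) {a b a' b' v : V}
    (ha' : a' ∈ Seg G a b) (hb' : b' ∈ Seg G a b) (hv : v ∈ Seg G a' b') : v ∈ Seg G a b := by
  classical
  exact TreeGeo.seg_convex hT ha' hb' hv

/-! ### the gate point -/

def segPred (G : SimpleGraph V) (p : V) (S : Set V) (m : V) : Prop :=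
  (∀ v ∈ S, m ∈ Seg G p v) ∧ (∀ a b : V, S ⊆ Seg G a b → m ∈ Seg G a b)

open Classical in
noncomputable def gatept (G : SimpleGraph V) (p : V) (S : Set V) : V :=
  if h : ∃ m, segPred G p S m then h.choose else p

theorem gatept_spec {G : SimpleGraph V} {p : V} {S : Set V} (h : ∃ m, segPred G p S m) :
    segPred G p S (gatept G p S) := by
  classical
  rw [gatept]
  rw [dif_pos h]
  exact h.choose_spec

noncomputable def gpt (G : SimpleGraph V) (p : V) {k : ℕ} (x : Fin k → V) : V :=
  gatept G p (Set.range x)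

theorem gpt_perm (G : SimpleGraph V) (p : V) {k : ℕ} (x : Fin k → V) (σ : Equiv.Perm (Fin k)) :
    gpt G p (x ∘ σ) = gpt G p x := by
  rw [gpt, gpt, Set.range_comp, Equiv.range_eq_univ, Set.image_univ]

theorem self_mem_seg_left {G : SimpleGraph V} (p v : V) : p ∈ Seg G p v := by
  show G.dist p p + G.dist p v = G.dist p v
  rw [SimpleGraph.dist_self]; omega

theorem self_mem_seg_right {G : SimpleGraph V} (p v : V) : v ∈ Seg G p v := by
  show G.dist p v + G.dist v v = G.dist p v
  rw [SimpleGraph.dist_self]; omega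

theorem seg_trans {G : SimpleGraph V} (hT : G.IsTree) {p q m v : V}
    (h1 : q ∈ Seg G p m) (h2 : m ∈ Seg G p v) : q ∈ Seg G p v := by
  have e1 : G.dist p q + G.dist q m = G.dist p m := h1
  have e2 : G.dist p m + G.dist m v = G.dist p v := h2
  have e3 : G.dist q v ≤ G.dist q m + G.dist m v := hT.isConnected.dist_triangle
  have e4 : G.dist p v ≤ G.dist p q + G.dist q v := hT.isConnected.dist_triangle
  show G.dist p q + G.dist q v = G.dist p v
  omega

theorem gpt_exists {G : SimpleGraph V} (hT : G.IsTree) (p : V) :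
    ∀ {n : ℕ} (x : Fin (n + 1) → V), Aligned G x → ∃ m, segPred G p (Set.range x) m := by
  intro n
  induction n with
  | zero =>
      intro x _
      refine ⟨x 0, ?_, ?_⟩
      · rintro v ⟨i, rfl⟩
        have : i = 0 := by apply Fin.val_injective; omega
        subst this
        exact self_mem_seg_right p (x 0)
      · intro a b hS
        exact hS ⟨0, rfl⟩
  | succ n ih =>
      intro x hx
      have hy : Aligned G (x ∘ Fin.castSucc) := by
        obtain ⟨a, b, hab⟩ := hx
        exact ⟨a, b, fun k => hab _⟩
      obtain ⟨m', hm'⟩ := ih (x ∘ Fin.castSucc) hy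
      set w := x (Fin.last (n + 1)) with hw
      obtain ⟨q, hq1, hq2, hq3⟩ := median'' hT p m' w
      refine ⟨q, ?_, ?_⟩
      · rintro v ⟨i, rfl⟩
        induction i using Fin.lastCases with
        | last => exact hq2
        | cast j =>
            have hmv : m' ∈ Seg G p (x (Fin.castSucc j)) := hm'.1 _ ⟨j, rfl⟩
            exact seg_trans hT hq1 hmv
      · intro a b hS
        have hm'ab : m' ∈ Seg G a b := hm'.2 a b (by
          rintro v ⟨j, rfl⟩
          exact hS ⟨Fin.castSucc j, rfl⟩)
        have hwab : w ∈ Seg G a b := hS ⟨Fin.last (n + 1), rfl⟩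
        exact seg_convex'' hT hm'ab hwab hq3

/-! ### the homotopy -/

theorem lift_single {X : Type*} {M : Type*} [AddCommGroup M] [Module ℝ M]
    (F : X → M) (x : X) (r : ℝ) :
    (Finsupp.lift M ℝ X F) (Finsupp.single x r) = r • F x := by
  rw [Finsupp.lift_apply, Finsupp.sum_single_index]
  rw [zero_smul]

theorem homo_ker (G : SimpleGraph V) (p : V)
    (bnd : ∀ n : ℕ, AltChain V ℝ (n + 1) →ₗ[ℝ] AltChain V ℝ n) (n : ℕ)
    (hprev : AltChain V ℝ n →ₗ[ℝ] AltChain V ℝ (n + 1)) :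
    altRel V ℝ (n + 1) ≤ LinearMap.ker (Finsupp.lift (AltChain V ℝ (n + 2)) ℝ _
      (fun x : Fin (n + 2) → V =>
        coneQ (gpt G p x) (chainOf x - hprev (bnd n (chainOf x))))) := by
  refine Submodule.span_le.mpr ?_
  rintro f ⟨x, σ, rfl⟩
  simp only [SetLike.mem_coe, LinearMap.mem_ker, map_sub, map_smul]
  rw [lift_single, lift_single, one_smul, one_smul]
  rw [gpt_perm, chainOf_perm]
  simp only [map_smul, smul_sub, smul_smul, sign_val_sq, one_smul]
  abel

noncomputable def homo (G : SimpleGraph V) (p : V)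
    (bnd : ∀ n : ℕ, AltChain V ℝ (n + 1) →ₗ[ℝ] AltChain V ℝ n) :
    (n : ℕ) → AltChain V ℝ n →ₗ[ℝ] AltChain V ℝ (n + 1)
  | 0 => coneQ p
  | (n + 1) => Submodule.liftQ _ (Finsupp.lift _ ℝ _
      (fun x : Fin (n + 2) → V =>
        coneQ (gpt G p x) (chainOf x - homo G p bnd n (bnd n (chainOf x)))))
      (homo_ker G p bnd n (homo G p bnd n))

theorem homo_zero_chainOf (G : SimpleGraph V) (p : V)
    (bnd : ∀ n : ℕ, AltChain V ℝ (n + 1) →ₗ[ℝ] AltChain V ℝ n) (x : Fin 1 → V) :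
    homo G p bnd 0 (chainOf x) = chainOf (Fin.cons p x) := by
  rw [homo, coneQ_chainOf]

theorem homo_succ_chainOf (G : SimpleGraph V) (p : V)
    (bnd : ∀ n : ℕ, AltChain V ℝ (n + 1) →ₗ[ℝ] AltChain V ℝ n) {n : ℕ}
    (x : Fin (n + 2) → V) :
    homo G p bnd (n + 1) (chainOf x) =
      coneQ (gpt G p x) (chainOf x - homo G p bnd n (bnd n (chainOf x))) := by
  rw [homo, chainOf, Submodule.liftQ_apply, lift_single, one_smul]
  rfl

/-! ### homotopy identities -/

section Identities

variable (G : SimpleGraph V) (p : V)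
variable (bnd : ∀ n : ℕ, AltChain V ℝ (n + 1) →ₗ[ℝ] AltChain V ℝ n)
variable (hbnd : ∀ (n : ℕ) (y : Fin (n + 2) → V),
      bnd n (chainOf y) =
        ∑ j : Fin (n + 2), ((-1 : ℝ) ^ (j : ℕ)) • chainOf (y ∘ Fin.succAbove j))
variable (eps : AltChain V ℝ 0 →ₗ[ℝ] ℝ)
variable (heps : ∀ x : Fin 1 → V, eps (chainOf x) = 1)

include hbnd heps in
theorem eps_bnd0 (c : AltChain V ℝ 1) : eps (bnd 0 c) = 0 := by
  have : eps.comp (bnd 0) = (0 : AltChain V ℝ 1 →ₗ[ℝ] ℝ) := by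
    apply altchain_ext
    intro y
    simp only [LinearMap.comp_apply, LinearMap.zero_apply]
    rw [hbnd 0 y, map_sum]
    rw [Fin.sum_univ_two]
    simp only [map_smul, smul_eq_mul, heps]
    norm_num
  have := LinearMap.congr_fun this c
  simpa using this

include hbnd heps in
theorem homo_id0 (c : AltChain V ℝ 0) :
    bnd 0 (homo G p bnd 0 c) + eps c • chainOf (fun _ : Fin 1 => p) = c := by
  have key : (bnd 0).comp (homo G p bnd 0)
      + LinearMap.smulRight eps (chainOf (fun _ : Fin 1 => p)) = LinearMap.id := by
    apply altchain_ext
    intro x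
    simp only [LinearMap.add_apply, LinearMap.comp_apply, LinearMap.smulRight_apply,
      LinearMap.id_apply]
    rw [homo_zero_chainOf, hbnd 0 (Fin.cons p x), Fin.sum_univ_two]
    have h0 : (Fin.cons p x : Fin 2 → V) ∘ Fin.succAbove 0 = x :=
      cons_comp_succAbove_zero p x
    have h1 : (Fin.cons p x : Fin 2 → V) ∘ Fin.succAbove 1 = (fun _ : Fin 1 => p) := by
      funext t
      have : t = 0 := by apply Fin.val_injective; omega
      subst this
      rfl
    rw [h0, h1, heps x]
    simp
  have := LinearMap.congr_fun key c
  simpa using this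

include hbnd heps in
theorem homo_id (n : ℕ) (c : AltChain V ℝ (n + 1)) :
    bnd (n + 1) (homo G p bnd (n + 1) c) + homo G p bnd n (bnd n c) = c := by
  induction n with
  | zero =>
      have key : (bnd 1).comp (homo G p bnd 1)
          + (homo G p bnd 0).comp (bnd 0) = LinearMap.id := by
        apply altchain_ext
        intro x
        simp only [LinearMap.add_apply, LinearMap.comp_apply, LinearMap.id_apply]
        rw [homo_succ_chainOf]
        rw [bnd_coneQ bnd hbnd]
        have hzero : bnd 0 (chainOf x - homo G p bnd 0 (bnd 0 (chainOf x))) = 0 := by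
          rw [map_sub]
          have h1 := homo_id0 G p bnd hbnd eps heps (bnd 0 (chainOf x))
          have h2 : eps (bnd 0 (chainOf x)) = 0 := eps_bnd0 bnd hbnd eps heps _
          rw [h2, zero_smul, add_zero] at h1
          rw [h1, sub_self]
        rw [hzero, map_zero, sub_zero]
        abel
      have := LinearMap.congr_fun key c
      simpa using this
  | succ m ih =>
      have key : (bnd (m + 2)).comp (homo G p bnd (m + 2))
          + (homo G p bnd (m + 1)).comp (bnd (m + 1)) = LinearMap.id := by
        apply altchain_ext
        intro x
        simp only [LinearMap.add_apply, LinearMap.comp_apply, LinearMap.id_apply]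
        rw [homo_succ_chainOf]
        rw [bnd_coneQ bnd hbnd]
        have hzero : bnd (m + 1) (chainOf x
            - homo G p bnd (m + 1) (bnd (m + 1) (chainOf x))) = 0 := by
          rw [map_sub]
          have h1 := ih (bnd (m + 1) (chainOf x))
          have h2 : bnd m (bnd (m + 1) (chainOf x)) = 0 := bnd_bnd bnd hbnd _
          rw [h2, map_zero, add_zero] at h1
          rw [h1, sub_self]
        rw [hzero, map_zero, sub_zero]
        abel
      have := LinearMap.congr_fun key c
      simpa using this

end Identities

/-! ### alignment -/

section Align

variable {G : SimpleGraph V} {p : V}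

/-- admissible output tuples relative to an input tuple `x` -/
def OKrel (G : SimpleGraph V) (p : V) {k m : ℕ} (x : Fin k → V) (z : Fin m → V) : Prop :=
  (∀ a b : V, (∀ i, x i ∈ Seg G a b) → ∀ j, z j ∈ Seg G a b) ∨
    (∃ i, ∀ j, z j ∈ Seg G p (x i))

noncomputable def OKsub (G : SimpleGraph V) (p : V) {n : ℕ} (x : Fin (n + 1) → V) :
    Submodule ℝ (AltChain V ℝ (n + 1)) :=
  Submodule.span ℝ {c | ∃ z : Fin (n + 2) → V, OKrel G p x z ∧ c = chainOf z}

theorem coneQ_OK (hT : G.IsTree) {n : ℕ} (x : Fin (n + 2) → V) (hx : Aligned G x)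
    (j : Fin (n + 2)) {c : AltChain V ℝ (n + 1)} (hc : c ∈ OKsub G p (x ∘ Fin.succAbove j)) :
    coneQ (gpt G p x) c ∈ OKsub G p x := by
  have hg : segPred G p (Set.range x) (gpt G p x) := gatept_spec (gpt_exists hT p x hx)
  refine Submodule.span_induction ?_ ?_ ?_ ?_ hc
  · rintro c ⟨z, hz, rfl⟩
    rw [coneQ_chainOf]
    refine Submodule.subset_span ⟨Fin.cons (gpt G p x) z, ?_, rfl⟩
    rcases hz with hL | ⟨i, hR⟩
    · left
      intro a b hab k
      induction k using Fin.cases with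
      | zero =>
          simp only [Fin.cons_zero]
          exact hg.2 a b (by rintro v ⟨i', rfl⟩; exact hab i')
      | succ t =>
          simp only [Fin.cons_succ]
          exact hL a b (fun i' => hab _) t
    · right
      refine ⟨Fin.succAbove j i, ?_⟩
      intro k
      induction k using Fin.cases with
      | zero =>
          simp only [Fin.cons_zero]
          exact hg.1 _ ⟨Fin.succAbove j i, rfl⟩
      | succ t =>
          simp only [Fin.cons_succ]
          exact hR t
  · simp only [map_zero]; exact Submodule.zero_mem _
  · intro a b _ _ ha hb
    rw [map_add]; exact Submodule.add_mem _ ha hb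
  · intro r a _ ha
    rw [map_smul]; exact Submodule.smul_mem _ _ ha

theorem coneQ_self_OK (hT : G.IsTree) {n : ℕ} (x : Fin (n + 2) → V) (hx : Aligned G x) :
    coneQ (gpt G p x) (chainOf x) ∈ OKsub G p x := by
  have hg : segPred G p (Set.range x) (gpt G p x) := gatept_spec (gpt_exists hT p x hx)
  rw [coneQ_chainOf]
  refine Submodule.subset_span ⟨Fin.cons (gpt G p x) x, ?_, rfl⟩
  left
  intro a b hab k
  induction k using Fin.cases with
  | zero =>
      simp only [Fin.cons_zero]
      exact hg.2 a b (by rintro v ⟨i', rfl⟩; exact hab i')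
  | succ t =>
      simp only [Fin.cons_succ]
      exact hab t

theorem OKsub_le_aligned {n : ℕ} (x : Fin (n + 1) → V) (hx : Aligned G x) :
    OKsub G p x ≤ alignedSub G ℝ (n + 1) := by
  rw [OKsub]
  refine Submodule.span_le.mpr ?_
  rintro c ⟨z, hz, rfl⟩
  refine Submodule.subset_span ⟨z, ?_, rfl⟩
  rcases hz with hL | ⟨i, hR⟩
  · obtain ⟨a, b, hab⟩ := hx
    exact ⟨a, b, hL a b hab⟩
  · exact ⟨p, x i, hR⟩

variable (bnd : ∀ n : ℕ, AltChain V ℝ (n + 1) →ₗ[ℝ] AltChain V ℝ n)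
variable (hbnd : ∀ (n : ℕ) (y : Fin (n + 2) → V),
      bnd n (chainOf y) =
        ∑ j : Fin (n + 2), ((-1 : ℝ) ^ (j : ℕ)) • chainOf (y ∘ Fin.succAbove j))

include hbnd in
theorem homo_OK (hT : G.IsTree) :
    ∀ (n : ℕ) (x : Fin (n + 1) → V), Aligned G x →
      homo G p bnd n (chainOf x) ∈ OKsub G p x := by
  intro n
  induction n with
  | zero =>
      intro x _
      rw [homo_zero_chainOf]
      refine Submodule.subset_span ⟨Fin.cons p x, ?_, rfl⟩
      right
      refine ⟨0, ?_⟩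
      intro k
      induction k using Fin.cases with
      | zero => simpa using self_mem_seg_left p (x 0)
      | succ t =>
          have : t = 0 := by apply Fin.val_injective; omega
          subst this
          simpa using self_mem_seg_right p (x 0)
  | succ m ih =>
      intro x hx
      rw [homo_succ_chainOf, map_sub]
      refine Submodule.sub_mem _ (coneQ_self_OK hT x hx) ?_
      rw [hbnd m x, map_sum, map_sum]
      refine Submodule.sum_mem _ ?_
      intro j _
      rw [map_smul, map_smul]
      refine Submodule.smul_mem _ _ ?_
      refine coneQ_OK hT x hx j ?_
      refine ih (x ∘ Fin.succAbove j) ?_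
      obtain ⟨a, b, hab⟩ := hx
      exact ⟨a, b, fun k => hab _⟩

include hbnd in
theorem homo_aligned (hT : G.IsTree) (n : ℕ) :
    ∀ c ∈ alignedSub G ℝ n, homo G p bnd n c ∈ alignedSub G ℝ (n + 1) := by
  intro c hc
  refine Submodule.span_induction ?_ ?_ ?_ ?_ hc
  · rintro c ⟨x, hx, rfl⟩
    exact OKsub_le_aligned x hx (homo_OK bnd hbnd hT n x hx)
  · simp only [map_zero]; exact Submodule.zero_mem _
  · intro a b _ _ ha hb
    rw [map_add]; exact Submodule.add_mem _ ha hb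
  · intro r a _ ha
    rw [map_smul]; exact Submodule.smul_mem _ _ ha

end Align

/-! ### norms -/

section Nrm

variable {α β : Type*}

noncomputable def nrm (f : α →₀ ℝ) : ℝ := ∑ x ∈ f.support, |f x|

theorem nrm_nonneg (f : α →₀ ℝ) : 0 ≤ nrm f :=
  Finset.sum_nonneg fun _ _ => abs_nonneg _

theorem nrm_zero : nrm (0 : α →₀ ℝ) = 0 := by simp [nrm]

theorem nrm_single_le (a : α) (r : ℝ) : nrm (Finsupp.single a r) ≤ |r| := by
  rcases eq_or_ne r 0 with rfl | hr
  · simp [nrm]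
  · rw [nrm, Finsupp.support_single_ne_zero _ hr, Finset.sum_singleton,
      Finsupp.single_eq_same]

theorem nrm_add_le (f g : α →₀ ℝ) : nrm (f + g) ≤ nrm f + nrm g := by
  classical
  have hsub : (f + g).support ⊆ f.support ∪ g.support := Finsupp.support_add
  have h1 : nrm (f + g) ≤ ∑ x ∈ f.support ∪ g.support, |(f + g) x| := by
    rw [nrm]
    exact Finset.sum_le_sum_of_subset_of_nonneg hsub (fun _ _ _ => abs_nonneg _)
  have h2 : ∑ x ∈ f.support ∪ g.support, |(f + g) x|
      ≤ ∑ x ∈ f.support ∪ g.support, (|f x| + |g x|) := by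
    refine Finset.sum_le_sum fun x _ => ?_
    rw [Finsupp.add_apply]
    exact abs_add_le _ _
  have h3 : ∑ x ∈ f.support ∪ g.support, (|f x| + |g x|) = nrm f + nrm g := by
    rw [Finset.sum_add_distrib, nrm, nrm]
    congr 1
    · refine (Finset.sum_subset Finset.subset_union_left ?_).symm
      intro x _ hx
      rw [Finsupp.notMem_support_iff.1 hx, abs_zero]
    · refine (Finset.sum_subset Finset.subset_union_right ?_).symm
      intro x _ hx
      rw [Finsupp.notMem_support_iff.1 hx, abs_zero]
  linarith

theorem nrm_smul_le (r : ℝ) (f : α →₀ ℝ) : nrm (r • f) ≤ |r| * nrm f := by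
  classical
  have hsub : (r • f).support ⊆ f.support := Finsupp.support_smul
  have h1 : nrm (r • f) ≤ ∑ x ∈ f.support, |(r • f) x| := by
    rw [nrm]
    exact Finset.sum_le_sum_of_subset_of_nonneg hsub (fun _ _ _ => abs_nonneg _)
  have h2 : ∑ x ∈ f.support, |(r • f) x| = |r| * nrm f := by
    rw [nrm, Finset.mul_sum]
    refine Finset.sum_congr rfl fun x _ => ?_
    rw [Finsupp.smul_apply, smul_eq_mul, abs_mul]
  linarith

theorem nrm_neg (f : α →₀ ℝ) : nrm (-f) = nrm f := by
  rw [nrm, nrm, Finsupp.support_neg]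
  exact Finset.sum_congr rfl fun x _ => by rw [Finsupp.neg_apply, abs_neg]

theorem nrm_sub_le (f g : α →₀ ℝ) : nrm (f - g) ≤ nrm f + nrm g := by
  rw [sub_eq_add_neg]
  calc nrm (f + -g) ≤ nrm f + nrm (-g) := nrm_add_le f (-g)
    _ = nrm f + nrm g := by rw [nrm_neg]

theorem nrm_single_add {a : α} {g : α →₀ ℝ} (r : ℝ) (ha : a ∉ g.support) (hr : r ≠ 0) :
    nrm (Finsupp.single a r + g) = |r| + nrm g := by
  classical
  have hd : Disjoint (Finsupp.single a r).support g.support := by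
    rw [Finsupp.support_single_ne_zero _ hr]
    simpa using ha
  rw [nrm, Finsupp.support_add_eq hd, Finset.sum_union hd]
  congr 1
  · rw [Finsupp.support_single_ne_zero _ hr, Finset.sum_singleton, Finsupp.add_apply,
      Finsupp.single_eq_same, Finsupp.notMem_support_iff.1 ha, add_zero]
  · rw [nrm]
    refine Finset.sum_congr rfl fun x hx => ?_
    rw [Finsupp.add_apply, Finsupp.single_eq_of_ne, zero_add]
    rintro rfl
    exact (hd.forall_ne_finset (by simp [Finsupp.support_single_ne_zero _ hr]) hx) rfl

theorem nrm_mapDomain_le (h : α → β) (f : α →₀ ℝ) : nrm (Finsupp.mapDomain h f) ≤ nrm f := by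
  classical
  induction f using Finsupp.induction with
  | zero => simp [nrm]
  | single_add a r f ha' hr ih =>
      rw [Finsupp.mapDomain_add, Finsupp.mapDomain_single, nrm_single_add r ha' hr]
      calc nrm (Finsupp.single (h a) r + Finsupp.mapDomain h f)
          ≤ nrm (Finsupp.single (h a) r) + nrm (Finsupp.mapDomain h f) := nrm_add_le _ _
        _ ≤ |r| + nrm f := add_le_add (nrm_single_le _ _) ih

theorem nrm_sum_le {ι : Type*} (s : Finset ι) (f : ι → (α →₀ ℝ)) :
    nrm (∑ i ∈ s, f i) ≤ ∑ i ∈ s, nrm (f i) := by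
  classical
  induction s using Finset.induction with
  | empty => simp [nrm_zero]
  | insert a s hx ih =>
      rw [Finset.sum_insert hx, Finset.sum_insert hx]
      calc nrm (f a + ∑ i ∈ s, f i) ≤ nrm (f a) + nrm (∑ i ∈ s, f i) := nrm_add_le _ _
        _ ≤ nrm (f a) + ∑ i ∈ s, nrm (f i) := by linarith [ih]

end Nrm

section CnormBounds

theorem cnorm_le_nrm {n : ℕ} (f : (Fin (n + 1) → V) →₀ ℝ) {c : AltChain V ℝ n}
    (hf : (Submodule.Quotient.mk f : AltChain V ℝ n) = c) : cnorm c ≤ nrm f := by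
  refine csInf_le ⟨0, ?_⟩ ⟨f, hf, rfl⟩
  rintro r ⟨g, _, rfl⟩
  exact Finset.sum_nonneg fun _ _ => abs_nonneg _

theorem cnorm_set_nonempty {n : ℕ} (c : AltChain V ℝ n) :
    ∃ r, r ∈ {r : ℝ | ∃ f : (Fin (n + 1) → V) →₀ ℝ,
      (Submodule.Quotient.mk f : AltChain V ℝ n) = c ∧ r = ∑ x ∈ f.support, |f x|} := by
  obtain ⟨f, hf⟩ := Submodule.Quotient.mk_surjective _ c
  exact ⟨nrm f, f, hf, rfl⟩

variable (G : SimpleGraph V) (p : V)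
variable (bnd : ∀ n : ℕ, AltChain V ℝ (n + 1) →ₗ[ℝ] AltChain V ℝ n)
variable (hbnd : ∀ (n : ℕ) (y : Fin (n + 2) → V),
      bnd n (chainOf y) =
        ∑ j : Fin (n + 2), ((-1 : ℝ) ^ (j : ℕ)) • chainOf (y ∘ Fin.succAbove j))

theorem mk_eq_mkQ {n : ℕ} (f : (Fin (n + 1) → V) →₀ ℝ) :
    (Submodule.Quotient.mk f : AltChain V ℝ n) = (altRel V ℝ n).mkQ f := rfl

theorem mk_sum_smul {n : ℕ} (f : (Fin (n + 1) → V) →₀ ℝ) :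
    (Submodule.Quotient.mk f : AltChain V ℝ n) = ∑ x ∈ f.support, f x • chainOf x := by
  rw [mk_eq_mkQ]
  conv_lhs => rw [← Finsupp.sum_single f]
  rw [Finsupp.sum, map_sum]
  refine Finset.sum_congr rfl fun x _ => ?_
  show (Submodule.Quotient.mk (Finsupp.single x (f x)) : AltChain V ℝ n) = f x • chainOf x
  rw [chainOf, ← Submodule.Quotient.mk_smul, Finsupp.smul_single, smul_eq_mul, mul_one]

set_option maxHeartbeats 1000000 in
include hbnd in
theorem homo_rep (n : ℕ) : ∃ C : ℝ, 1 ≤ C ∧ ∀ x : Fin (n + 1) → V,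
    ∃ g : (Fin (n + 2) → V) →₀ ℝ,
      (Submodule.Quotient.mk g : AltChain V ℝ (n + 1)) = homo G p bnd n (chainOf x) ∧
        nrm g ≤ C := by
  induction n with
  | zero =>
      refine ⟨1, le_refl _, fun x => ⟨Finsupp.single (Fin.cons p x) 1, ?_, ?_⟩⟩
      · rw [homo_zero_chainOf]; rfl
      · simpa using nrm_single_le (Fin.cons p x : Fin 2 → V) (1 : ℝ)
  | succ m ih =>
      obtain ⟨C, hC1, hC⟩ := ih
      refine ⟨1 + (m + 2) * C, by nlinarith, fun x => ?_⟩
      choose g hg hgn using hC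
      have hFex : ∃ F : (Fin (m + 2) → V) →₀ ℝ,
          (Submodule.Quotient.mk F : AltChain V ℝ (m + 1))
            = chainOf x - homo G p bnd m (bnd m (chainOf x)) ∧ nrm F ≤ 1 + (m + 2) * C := by
        refine ⟨Finsupp.single x 1
          - ∑ j : Fin (m + 2), ((-1 : ℝ) ^ (j : ℕ)) • g (x ∘ Fin.succAbove j), ?_, ?_⟩
        · rw [Submodule.Quotient.mk_sub]
          congr 1
          rw [hbnd m x, map_sum, mk_eq_mkQ, map_sum]
          refine Finset.sum_congr rfl fun j _ => ?_
          rw [map_smul, map_smul, ← mk_eq_mkQ, hg]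
        · calc nrm (Finsupp.single x (1 : ℝ)
                - ∑ j : Fin (m + 2), ((-1 : ℝ) ^ (j : ℕ)) • g (x ∘ Fin.succAbove j))
              ≤ nrm (Finsupp.single x (1 : ℝ))
                + nrm (∑ j : Fin (m + 2), ((-1 : ℝ) ^ (j : ℕ)) • g (x ∘ Fin.succAbove j)) :=
                nrm_sub_le _ _
            _ ≤ 1 + (m + 2) * C := by
              have h1 : nrm (Finsupp.single x (1 : ℝ)) ≤ 1 := by
                simpa using nrm_single_le x (1 : ℝ)
              have h2 : nrm (∑ j : Fin (m + 2), ((-1 : ℝ) ^ (j : ℕ)) • g (x ∘ Fin.succAbove j))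
                  ≤ (m + 2) * C := by
                calc nrm (∑ j : Fin (m + 2), ((-1 : ℝ) ^ (j : ℕ)) • g (x ∘ Fin.succAbove j))
                    ≤ ∑ j : Fin (m + 2), nrm (((-1 : ℝ) ^ (j : ℕ)) • g (x ∘ Fin.succAbove j)) :=
                      nrm_sum_le _ _
                  _ ≤ ∑ _j : Fin (m + 2), C := by
                      refine Finset.sum_le_sum fun j _ => ?_
                      calc nrm (((-1 : ℝ) ^ (j : ℕ)) • g (x ∘ Fin.succAbove j))
                          ≤ |(-1 : ℝ) ^ (j : ℕ)| * nrm (g (x ∘ Fin.succAbove j)) :=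
                            nrm_smul_le _ _
                        _ = nrm (g (x ∘ Fin.succAbove j)) := by
                            rw [abs_pow, abs_neg, abs_one, one_pow, one_mul]
                        _ ≤ C := hgn _
                  _ = (m + 2) * C := by
                      rw [Finset.sum_const, Finset.card_univ, Fintype.card_fin]
                      push_cast
                      ring
              linarith
      obtain ⟨F, hmkF, hnF⟩ := hFex
      refine ⟨Finsupp.mapDomain (fun z => Fin.cons (gpt G p x) z) F, ?_, ?_⟩
      · calc (Submodule.Quotient.mk (Finsupp.mapDomain (fun z => Fin.cons (gpt G p x) z) F)
              : AltChain V ℝ (m + 2))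
            = coneQ (gpt G p x) (Submodule.Quotient.mk F) := (coneQ_mk _ _).symm
          _ = coneQ (gpt G p x) (chainOf x - homo G p bnd m (bnd m (chainOf x))) := by
              rw [hmkF]
          _ = homo G p bnd (m + 1) (chainOf x) := (homo_succ_chainOf G p bnd x).symm
      · exact le_trans (nrm_mapDomain_le _ _) hnF

include hbnd in
theorem homo_bound (n : ℕ) : ∃ C : ℝ, 1 ≤ C ∧ ∀ c : AltChain V ℝ n,
    cnorm (homo G p bnd n c) ≤ C * cnorm c := by
  obtain ⟨C, hC1, hC⟩ := homo_rep G p bnd hbnd n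
  choose g hg hgn using hC
  refine ⟨C, hC1, fun c => ?_⟩
  have key : ∀ f : (Fin (n + 1) → V) →₀ ℝ,
      (Submodule.Quotient.mk f : AltChain V ℝ n) = c →
        cnorm (homo G p bnd n c) ≤ C * nrm f := by
    intro f hf
    classical
    have hrep : (Submodule.Quotient.mk (∑ x ∈ f.support, f x • g x)
        : AltChain V ℝ (n + 1)) = homo G p bnd n c := by
      rw [mk_eq_mkQ, map_sum]
      have h1 : ∀ x ∈ f.support, (altRel V ℝ (n + 1)).mkQ (f x • g x)
          = f x • homo G p bnd n (chainOf x) := by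
        intro x _
        rw [map_smul, ← mk_eq_mkQ, hg]
      rw [Finset.sum_congr rfl h1]
      rw [← hf, mk_sum_smul f, map_sum]
      refine Finset.sum_congr rfl fun x _ => ?_
      rw [map_smul]
    have h2 : cnorm (homo G p bnd n c) ≤ nrm (∑ x ∈ f.support, f x • g x) :=
      cnorm_le_nrm _ hrep
    have h3 : nrm (∑ x ∈ f.support, f x • g x) ≤ C * nrm f := by
      calc nrm (∑ x ∈ f.support, f x • g x) ≤ ∑ x ∈ f.support, nrm (f x • g x) :=
            nrm_sum_le _ _
        _ ≤ ∑ x ∈ f.support, |f x| * C := by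
            refine Finset.sum_le_sum fun x _ => ?_
            calc nrm (f x • g x) ≤ |f x| * nrm (g x) := nrm_smul_le _ _
              _ ≤ |f x| * C := by
                  have := abs_nonneg (f x)
                  nlinarith [hgn x, abs_nonneg (f x)]
        _ = C * nrm f := by
            rw [nrm, Finset.mul_sum]
            exact Finset.sum_congr rfl fun x _ => by ring
    linarith
  -- pass to the infimum
  have hpos : (0 : ℝ) < C := by linarith
  have hle : ∀ r ∈ {r : ℝ | ∃ f : (Fin (n + 1) → V) →₀ ℝ,
      (Submodule.Quotient.mk f : AltChain V ℝ n) = c ∧ r = ∑ x ∈ f.support, |f x|},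
      cnorm (homo G p bnd n c) / C ≤ r := by
    rintro r ⟨f, hf, rfl⟩
    rw [div_le_iff₀ hpos]
    calc cnorm (homo G p bnd n c) ≤ C * nrm f := key f hf
      _ = (∑ x ∈ f.support, |f x|) * C := by rw [nrm]; ring
  have hne := cnorm_set_nonempty c
  have : cnorm (homo G p bnd n c) / C ≤ cnorm c := by
    rw [cnorm]
    exact le_csInf hne hle
  calc cnorm (homo G p bnd n c) = (cnorm (homo G p bnd n c) / C) * C := by
        field_simp
    _ ≤ cnorm c * C := by nlinarith
    _ = C * cnorm c := by ring

end CnormBounds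

set_option maxHeartbeats 1000000 in
/-- Let `T` be a non-empty simplicial tree. The augmented complex
`0 ← ℝ ←(ε) A₀(T,ℝ) ←(∂) A₁(T,ℝ) ←(∂) A₂(T,ℝ) ← ⋯` admits a bounded contracting
homotopy: bounded linear maps `s : ℝ → A₀(T,ℝ)` and `h_n : A_n(T,ℝ) → A_{n+1}(T,ℝ)`
with `ε∘s = id`, `∂∘h₀ + s∘ε = id` on `A₀(T,ℝ)` and `∂∘h_n + h_{n−1}∘∂ = id` on
`A_n(T,ℝ)` for `n ≥ 1`. The boundaries `∂` are characterised on tuples as the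
alternating sums of the faces, and the augmentation `ε` by `ε(x₀) = 1`; the maps `h_n`
are given as (linear extensions of) maps defined on `A_n(T,ℝ)`, and all conditions are
required on `A_n(T,ℝ)` with the ℓ¹-quotient norm. -/
theorem statement12 (G : SimpleGraph V) [Nonempty V] (hT : G.IsTree)
    (bnd : ∀ n : ℕ, AltChain V ℝ (n + 1) →ₗ[ℝ] AltChain V ℝ n)
    (hbnd : ∀ (n : ℕ) (y : Fin (n + 2) → V),
      bnd n (chainOf y) =
        ∑ j : Fin (n + 2), ((-1 : ℝ) ^ (j : ℕ)) • chainOf (y ∘ Fin.succAbove j))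
    (eps : AltChain V ℝ 0 →ₗ[ℝ] ℝ)
    (heps : ∀ x : Fin 1 → V, eps (chainOf x) = 1) :
    ∃ (s : ℝ →ₗ[ℝ] AltChain V ℝ 0) (h : ∀ n : ℕ, AltChain V ℝ n →ₗ[ℝ] AltChain V ℝ (n + 1)),
      -- `s` and the `h_n` are bounded
      (∃ C : ℝ, ∀ r : ℝ, cnorm (s r) ≤ C * |r|) ∧
      (∀ n : ℕ, ∃ C : ℝ, ∀ c ∈ alignedSub G ℝ n, cnorm (h n c) ≤ C * cnorm c) ∧
      -- `s` and the `h_n` take values in the aligned chains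
      (∀ r : ℝ, s r ∈ alignedSub G ℝ 0) ∧
      (∀ n : ℕ, ∀ c ∈ alignedSub G ℝ n, h n c ∈ alignedSub G ℝ (n + 1)) ∧
      -- `ε ∘ s = id`
      (∀ r : ℝ, eps (s r) = r) ∧
      -- `∂ ∘ h₀ + s ∘ ε = id` on `A₀(T,ℝ)`
      (∀ c ∈ alignedSub G ℝ 0, bnd 0 (h 0 c) + s (eps c) = c) ∧
      -- `∂ ∘ h_n + h_{n−1} ∘ ∂ = id` on `A_n(T,ℝ)` for `n ≥ 1`
      (∀ n : ℕ, ∀ c ∈ alignedSub G ℝ (n + 1),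
        bnd (n + 1) (h (n + 1) c) + h n (bnd n c) = c) := by
  classical
  set p := Classical.arbitrary V with hp
  set κ : AltChain V ℝ 0 := chainOf (fun _ : Fin 1 => p) with hκ
  refine ⟨LinearMap.toSpanSingleton ℝ _ κ, homo G p bnd, ?_, ?_, ?_, ?_, ?_, ?_, ?_⟩
  · refine ⟨1, fun r => ?_⟩
    have hsr : LinearMap.toSpanSingleton ℝ (AltChain V ℝ 0) κ r
        = Submodule.Quotient.mk (Finsupp.single (fun _ : Fin 1 => p) r) := by
      rw [LinearMap.toSpanSingleton_apply, hκ, chainOf, ← Submodule.Quotient.mk_smul,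
        Finsupp.smul_single, smul_eq_mul, mul_one]
    rw [hsr]
    have h1 := cnorm_le_nrm (Finsupp.single (fun _ : Fin 1 => p) r) rfl
    have h2 := nrm_single_le (fun _ : Fin 1 => p) r
    rw [one_mul]
    linarith
  · intro n
    obtain ⟨C, -, hC⟩ := homo_bound G p bnd hbnd n
    exact ⟨C, fun c _ => hC c⟩
  · intro r
    rw [LinearMap.toSpanSingleton_apply]
    refine Submodule.smul_mem _ _ (Submodule.subset_span ?_)
    exact ⟨fun _ : Fin 1 => p, ⟨p, p, fun _ => self_mem_seg_left p p⟩, rfl⟩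
  · intro n c hc
    exact homo_aligned bnd hbnd hT n c hc
  · intro r
    rw [LinearMap.toSpanSingleton_apply, map_smul, hκ, heps, smul_eq_mul, mul_one]
  · intro c _
    have := homo_id0 G p bnd hbnd eps heps c
    rw [LinearMap.toSpanSingleton_apply]
    exact this
  · intro n c _
    exact homo_id G p bnd hbnd eps heps n c
end

section
/- Let T be a non-empty simplicial tree and V a real Banach space. Then the augmented cochain complex 0 → V → ℓ∞_align(T,V) → ℓ∞_align(T²,V) → ℓ∞_align(T³,V) → ⋯ is exact, where the first map sends v ∈ V to the constant function with value v and the differentials are the simplicial coboundaries d. -/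
/-!
Common definitions: trees are modelled as simple graphs `G` on a vertex type `V`
satisfying `G.IsTree`; `Seg G a b` is the geodesic segment `[a,b]` (the set of
vertices lying on the geodesic from `a` to `b`); `Aligned` tuples are those
contained in some geodesic segment; `AltChain V R n` is the module `C_n(T,R)` of
alternating `n`-chains; `chainOf x` is the class of a tuple; `alignedSub G R n`
is `A_n(T,R)`; `cnorm` is the ℓ¹-quotient norm.
-/

open Finsupp

variable {V : Type*}

/-- Membership in `ℓ∞_align(T^{n+1}, W)`: bounded, alternating, and vanishing on
non-aligned tuples. -/
def IsAlFun (G : SimpleGraph V) {W : Type*} [SeminormedAddCommGroup W]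
    (n : ℕ) (f : (Fin (n + 1) → V) → W) : Prop :=
  (∃ C : ℝ, ∀ x, ‖f x‖ ≤ C) ∧
  (∀ (σ : Equiv.Perm (Fin (n + 1))) (x : Fin (n + 1) → V),
    f (x ∘ σ) = (Equiv.Perm.sign σ : ℤ) • f x) ∧
  (∀ x : Fin (n + 1) → V, ¬Aligned G x → f x = 0)

open Classical in
/-- The simplicial coboundary on `ℓ∞_align`: the alternating sum of the values on the
faces on aligned tuples, and `0` on non-aligned tuples. -/
noncomputable def cobd (G : SimpleGraph V) {W : Type*} [AddCommGroup W] (n : ℕ)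
    (f : (Fin (n + 1) → V) → W) : (Fin (n + 2) → V) → W :=
  fun x => if Aligned G x then
    ∑ j : Fin (n + 2), ((-1 : ℤ) ^ (j : ℕ)) • f (x ∘ Fin.succAbove j) else 0

namespace S13
open SimpleGraph
open Classical

variable {V : Type*} {G : SimpleGraph V}

/-- Betweenness. -/
def Btw (G : SimpleGraph V) (a v b : V) : Prop :=
  G.dist a v + G.dist v b = G.dist a b

section Tree

variable (hc : G.Connected) (hac : G.IsAcyclic)
include hc hac

/-- In a tree, every path realizes the distance. -/
theorem path_length_eq_dist {u v : V} (P : G.Walk u v) (hP : P.IsPath) :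
    P.length = G.dist u v := by
  obtain ⟨Q, hQp, hQl⟩ := hc.exists_path_of_dist u v
  have : (⟨P, hP⟩ : G.Path u v) = ⟨Q, hQp⟩ := hac.path_unique _ _
  rw [show P = Q from congrArg Subtype.val this, hQl]

theorem btw_of_mem_support {u v w : V} (P : G.Walk u v) (hP : P.IsPath)
    (h : w ∈ P.support) : Btw G u w v := by
  have h1 := path_length_eq_dist hc hac _ (hP.takeUntil h)
  have h2 := path_length_eq_dist hc hac _ (hP.dropUntil h)
  have h3 := path_length_eq_dist hc hac P hP
  have h4 := congrArg Walk.length (P.take_spec h)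
  rw [Walk.length_append] at h4
  unfold Btw
  omega

/-- Key concatenation lemma: if the only vertex lying between `u,v` and
between `v,w` is `v` itself, then `v` is between `u` and `w`. -/
theorem btw_of_forall {u v w : V}
    (H : ∀ x, Btw G u x v → Btw G v x w → x = v) : Btw G u v w := by
  obtain ⟨p₁, hp₁, _⟩ := hc.exists_path_of_dist u v
  obtain ⟨p₂, hp₂, _⟩ := hc.exists_path_of_dist v w
  have hA : (p₁.append p₂).IsPath := by
    rw [Walk.isPath_def, Walk.support_append, List.nodup_append]
    refine ⟨hp₁.support_nodup, ?_, ?_⟩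
    · have := hp₂.support_nodup
      rw [p₂.support_eq_cons] at this
      exact this.of_cons
    · intro x hx1 y hx2 hxy
      rw [← hxy] at hx2
      have hxv : x ≠ v := by
        intro h; subst h
        have := hp₂.support_nodup
        rw [p₂.support_eq_cons] at this
        exact (List.nodup_cons.mp this).1 hx2
      have b1 := btw_of_mem_support hc hac p₁ hp₁ hx1
      have b2 := btw_of_mem_support hc hac p₂ hp₂ (List.mem_of_mem_tail hx2)
      exact hxv (H x b1 b2)
  have hlen := path_length_eq_dist hc hac _ hA
  rw [Walk.length_append, path_length_eq_dist hc hac p₁ hp₁,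
    path_length_eq_dist hc hac p₂ hp₂] at hlen
  exact hlen

theorem mem_support_of_btw {a b v : V} (P : G.Walk a b) (hP : P.IsPath)
    (h : Btw G a v b) : v ∈ P.support := by
  obtain ⟨p₁, hp₁, _⟩ := hc.exists_path_of_dist a v
  obtain ⟨p₂, hp₂, _⟩ := hc.exists_path_of_dist v b
  have hA : (p₁.append p₂).IsPath := by
    rw [Walk.isPath_def, Walk.support_append, List.nodup_append]
    refine ⟨hp₁.support_nodup, ?_, ?_⟩
    · have := hp₂.support_nodup
      rw [p₂.support_eq_cons] at this
      exact this.of_cons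
    · intro x hx1 y hx2 hxy
      rw [← hxy] at hx2
      exfalso
      have hxv : x ≠ v := by
        intro hh; subst hh
        have := hp₂.support_nodup
        rw [p₂.support_eq_cons] at this
        exact (List.nodup_cons.mp this).1 hx2
      have b1 := btw_of_mem_support hc hac p₁ hp₁ hx1
      have b2 := btw_of_mem_support hc hac p₂ hp₂ (List.mem_of_mem_tail hx2)
      have tri : G.dist a b ≤ G.dist a x + G.dist x b := hc.dist_triangle
      have hpos : 0 < G.dist x v := hc.pos_dist_of_ne hxv
      have c1 : G.dist x v = G.dist v x := G.dist_comm
      unfold Btw at h b1 b2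
      omega
  have hAeq : (⟨p₁.append p₂, hA⟩ : G.Path a b) = ⟨P, hP⟩ := hac.path_unique _ _
  have : v ∈ (p₁.append p₂).support := by
    rw [Walk.mem_support_append_iff]
    left; exact p₁.end_mem_support
  rwa [show p₁.append p₂ = P from congrArg Subtype.val hAeq] at this

/-- Dichotomy: two points on a geodesic segment are comparable. -/
theorem btw_total {a b v v' : V} (hv : Btw G a v b) (hv' : Btw G a v' b) :
    Btw G a v v' ∨ Btw G a v' v := by
  obtain ⟨P, hP, _⟩ := hc.exists_path_of_dist a b
  have hvs := mem_support_of_btw hc hac P hP hv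
  have hv's := mem_support_of_btw hc hac P hP hv'
  have hsplit : v' ∈ (P.takeUntil v hvs).support ∨ v' ∈ (P.dropUntil v hvs).support := by
    rw [← Walk.mem_support_append_iff, P.take_spec hvs]; exact hv's
  rcases hsplit with h | h
  · exact Or.inr (btw_of_mem_support hc hac _ (hP.takeUntil hvs) h)
  · left
    have b2 := btw_of_mem_support hc hac _ (hP.dropUntil hvs) h
    have tri1 : G.dist a v' ≤ G.dist a v + G.dist v v' := hc.dist_triangle
    have tri2 : G.dist a b ≤ G.dist a v' + G.dist v' b := hc.dist_triangle
    unfold Btw at *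
    omega

/-- Convexity of segments. -/
theorem btw_trans_seg {a b m v x : V} (hm : Btw G a m b) (hv : Btw G a v b)
    (hx : Btw G m x v) : Btw G a x b := by
  have hx' : Btw G v x m := by unfold Btw at *; rw [G.dist_comm (u := v) (v := x), G.dist_comm (u := x) (v := m), G.dist_comm (u := v) (v := m)] ; omega
  rcases btw_total hc hac hm hv with h | h
  · have t1 : G.dist a x ≤ G.dist a m + G.dist m x := hc.dist_triangle
    have t2 : G.dist x b ≤ G.dist x v + G.dist v b := hc.dist_triangle
    have t3 : G.dist a b ≤ G.dist a x + G.dist x b := hc.dist_triangle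
    unfold Btw at *
    omega
  · have t1 : G.dist a x ≤ G.dist a v + G.dist v x := hc.dist_triangle
    have t2 : G.dist x b ≤ G.dist x m + G.dist m b := hc.dist_triangle
    have t3 : G.dist a b ≤ G.dist a x + G.dist x b := hc.dist_triangle
    unfold Btw at *
    omega

/-- Gate (nearest-point projection) onto a segment. -/
theorem exists_gate (p a b : V) : ∃ m : V, Btw G a m b ∧
    ∀ v : V, Btw G a v b → Btw G p m v := by
  obtain ⟨P, hP, _⟩ := hc.exists_path_of_dist a b
  obtain ⟨m, hmS, hmin⟩ := P.support.toFinset.exists_min_image (fun z => G.dist p z)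
    ⟨a, by simp [P.start_mem_support]⟩
  rw [List.mem_toFinset] at hmS
  refine ⟨m, btw_of_mem_support hc hac P hP hmS, ?_⟩
  intro v hv
  apply btw_of_forall hc hac
  intro x b1 b2
  have hxS : Btw G a x b :=
    btw_trans_seg hc hac (btw_of_mem_support hc hac P hP hmS) hv b2
  have hmin' : G.dist p m ≤ G.dist p x := by
    apply hmin
    rw [List.mem_toFinset]
    exact mem_support_of_btw hc hac P hP hxS
  have : G.dist x m = 0 := by unfold Btw at b1; omega
  exact (hc.dist_eq_zero_iff.mp (by rwa [G.dist_comm] at this)).symm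

end Tree

section Comb

variable {W : Type*} [AddCommGroup W] {G : SimpleGraph V}

lemma succAbove_val {m : ℕ} (p : Fin (m+1)) (i : Fin m) :
    (p.succAbove i : ℕ) = if (i:ℕ) < (p:ℕ) then (i:ℕ) else (i:ℕ)+1 := by
  rw [Fin.succAbove]
  by_cases h : (i:ℕ) < (p:ℕ)
  · rw [if_pos (by simpa [Fin.lt_def] using h), if_pos h, Fin.coe_castSucc]
  · rw [if_neg (by simpa [Fin.lt_def] using h), if_neg h, Fin.val_succ]

lemma cons_comp_succAbove_zero {α : Type*} {n : ℕ} (u : α) (y : Fin (n+1) → α) :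
    (Fin.cons u y : Fin (n+2) → α) ∘ Fin.succAbove 0 = y := by
  funext k
  simp [Function.comp]

lemma cons_comp_succAbove_succ {α : Type*} {n : ℕ} (u : α) (y : Fin (n+1) → α) (j : Fin (n+1)) :
    (Fin.cons u y : Fin (n+2) → α) ∘ Fin.succAbove j.succ = Fin.cons u (y ∘ Fin.succAbove j) := by
  funext k
  refine Fin.cases ?_ (fun i => ?_) k
  · simp [Function.comp]
  · simp [Function.comp, Fin.succ_succAbove_succ]

lemma aligned_comp {m m' : ℕ} (g : Fin m' → Fin m) {x : Fin m → V} (hx : Aligned G x) :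
    Aligned G (x ∘ g) := by
  obtain ⟨a, b, hab⟩ := hx
  exact ⟨a, b, fun k => hab (g k)⟩

lemma aligned_comp_equiv {m : ℕ} (g : Fin m ≃ Fin m) {x : Fin m → V} :
    Aligned G (x ∘ g) ↔ Aligned G x := by
  constructor
  · intro hx
    have := aligned_comp (G := G) g.symm hx
    have he : (x ∘ g) ∘ g.symm = x := by funext k; simp
    rwa [he] at this
  · exact aligned_comp g

/-- The coboundary of a coboundary vanishes. -/
lemma cobd_cobd {n : ℕ} (h : (Fin (n+1) → V) → W) :
    cobd G (n+1) (cobd G n h) = 0 := by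
  funext y
  simp only [cobd, Pi.zero_apply]
  split_ifs with hy
  · have hface : ∀ j : Fin (n+3), Aligned G (y ∘ Fin.succAbove j) :=
      fun j => aligned_comp _ hy
    have step : ∀ j : Fin (n+3),
        ((-1 : ℤ) ^ (j : ℕ)) • (if Aligned G (y ∘ Fin.succAbove j) then
            ∑ i : Fin (n+2), ((-1 : ℤ) ^ (i : ℕ)) • h ((y ∘ Fin.succAbove j) ∘ Fin.succAbove i)
          else 0)
        = ∑ i : Fin (n+2), ((-1 : ℤ) ^ ((j : ℕ) + (i : ℕ))) • h (y ∘ Fin.succAbove j ∘ Fin.succAbove i) := by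
      intro j
      rw [if_pos (hface j), Finset.smul_sum]
      refine Finset.sum_congr rfl (fun i _ => ?_)
      rw [smul_smul, pow_add]
      rfl
    rw [Finset.sum_congr rfl (fun j _ => step j), ← Finset.sum_product']
    set F : Fin (n+3) × Fin (n+2) → W := fun a =>
      ((-1 : ℤ) ^ ((a.1 : ℕ) + (a.2 : ℕ))) • h (y ∘ Fin.succAbove a.1 ∘ Fin.succAbove a.2) with hF
    set φ : Fin (n+3) × Fin (n+2) → Fin (n+3) × Fin (n+2) := fun a =>
      if (a.2 : ℕ) < (a.1 : ℕ) then
        ((⟨(a.2 : ℕ), by have := a.2.2; omega⟩ : Fin (n+3)),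
         (⟨(a.1 : ℕ) - 1, by have := a.1.2; omega⟩ : Fin (n+2)))
      else
        ((⟨(a.2 : ℕ) + 1, by have := a.2.2; omega⟩ : Fin (n+3)),
         (⟨(a.1 : ℕ) % (n+2), Nat.mod_lt _ (by omega)⟩ : Fin (n+2))) with hφ
    have hφval : ∀ a : Fin (n+3) × Fin (n+2), ((a.2:ℕ) < (a.1:ℕ) →
          ((φ a).1 : ℕ) = (a.2:ℕ) ∧ ((φ a).2 : ℕ) = (a.1:ℕ) - 1)
        ∧ (¬ ((a.2:ℕ) < (a.1:ℕ)) →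
          ((φ a).1 : ℕ) = (a.2:ℕ) + 1 ∧ ((φ a).2 : ℕ) = (a.1:ℕ)) := by
      rintro ⟨j, i⟩
      refine ⟨fun h2 => ?_, fun h2 => ?_⟩
      · simp only [hφ]
        rw [if_pos h2]
        exact ⟨rfl, rfl⟩
      · simp only [hφ]
        rw [if_neg h2]
        have hj : ((j, i).1 : ℕ) < n+2 := by have := i.2; simp at h2 ⊢; omega
        exact ⟨rfl, by simp [Nat.mod_eq_of_lt hj]⟩
    have harg : ∀ a : Fin (n+3) × Fin (n+2),
        y ∘ Fin.succAbove (φ a).1 ∘ Fin.succAbove (φ a).2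
          = y ∘ Fin.succAbove a.1 ∘ Fin.succAbove a.2 := by
      intro a
      funext k
      simp only [Function.comp_apply]
      apply congrArg
      apply Fin.ext
      rcases hφval a with ⟨hlt, hge⟩
      by_cases h2 : (a.2:ℕ) < (a.1:ℕ)
      · obtain ⟨e1, e2⟩ := hlt h2
        simp only [succAbove_val, e1, e2]
        split_ifs <;> omega
      · obtain ⟨e1, e2⟩ := hge h2
        simp only [succAbove_val, e1, e2]
        split_ifs <;> omega
    have hsign : ∀ a : Fin (n+3) × Fin (n+2),
        ((-1 : ℤ) ^ (((φ a).1 : ℕ) + ((φ a).2 : ℕ))) = -((-1 : ℤ) ^ ((a.1 : ℕ) + (a.2 : ℕ))) := by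
      intro a
      rcases hφval a with ⟨hlt, hge⟩
      by_cases h2 : (a.2:ℕ) < (a.1:ℕ)
      · obtain ⟨e1, e2⟩ := hlt h2
        rw [e1, e2]
        obtain ⟨jw, hjw⟩ : ∃ jw, (a.1:ℕ) = jw + 1 := ⟨(a.1:ℕ)-1, by omega⟩
        rw [hjw]
        simp only [Nat.add_sub_cancel]
        rw [show jw + 1 + (a.2:ℕ) = (jw + (a.2:ℕ)) + 1 by omega, pow_succ,
          show (a.2:ℕ) + jw = jw + (a.2:ℕ) by omega]
        ring
      · obtain ⟨e1, e2⟩ := hge h2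
        rw [e1, e2]
        rw [show (a.2:ℕ) + 1 + (a.1:ℕ) = ((a.1:ℕ) + (a.2:ℕ)) + 1 by omega, pow_succ]
        ring
    have hinv : ∀ a, φ (φ a) = a := by
      intro a
      rcases hφval a with ⟨hlt, hge⟩
      rcases hφval (φ a) with ⟨hlt', hge'⟩
      by_cases h2 : (a.2:ℕ) < (a.1:ℕ)
      · obtain ⟨e1, e2⟩ := hlt h2
        have h3 : ¬ (((φ a).2:ℕ) < ((φ a).1:ℕ)) := by omega
        obtain ⟨e1', e2'⟩ := hge' h3
        have ha2 : (a.2:ℕ) + 1 ≤ (a.1:ℕ) := h2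
        refine Prod.ext (Fin.ext ?_) (Fin.ext ?_) <;> omega
      · obtain ⟨e1, e2⟩ := hge h2
        have h3 : (((φ a).2:ℕ) < ((φ a).1:ℕ)) := by omega
        obtain ⟨e1', e2'⟩ := hlt' h3
        refine Prod.ext (Fin.ext ?_) (Fin.ext ?_) <;> omega
    have hne : ∀ a, φ a ≠ a := by
      intro a hcon
      rcases hφval a with ⟨hlt, hge⟩
      by_cases h2 : (a.2:ℕ) < (a.1:ℕ)
      · obtain ⟨e1, _⟩ := hlt h2
        have := congrArg (fun z => ((z.1 : Fin (n+3)) : ℕ)) hcon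
        omega
      · obtain ⟨e1, _⟩ := hge h2
        have := congrArg (fun z => ((z.1 : Fin (n+3)) : ℕ)) hcon
        omega
    refine Finset.sum_involution (fun a _ => φ a) (fun a _ => ?_) (fun a _ _ => hne a)
      (fun a _ => Finset.mem_univ _) (fun a _ => hinv a)
    show F a + F (φ a) = 0
    rw [hF]
    dsimp only
    rw [harg a, hsign a, ← add_smul]
    rw [show ((-1:ℤ)^((a.1:ℕ)+(a.2:ℕ)) + -(-1:ℤ)^((a.1:ℕ)+(a.2:ℕ))) = 0 by ring, zero_smul]
  · rfl

end Comb

section QPoint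

variable (p : V)

lemma aligned_of_forall_mem {m m' : ℕ} {z : Fin m → V} {z' : Fin m' → V}
    (hsub : ∀ k, ∃ k', z k = z' k') (hz' : Aligned G z') : Aligned G z := by
  obtain ⟨a, b, hab⟩ := hz'
  refine ⟨a, b, fun k => ?_⟩
  obtain ⟨k', hk'⟩ := hsub k
  rw [hk']; exact hab k'

/-- `x` is aligned together with the base point `p`. -/
def PAl (G : SimpleGraph V) (p : V) {m : ℕ} (x : Fin m → V) : Prop :=
  Aligned G (Fin.cons p x)

/-- `u` is a gate for `p` relative to the tuple `x`. -/
def IsQ (G : SimpleGraph V) (p : V) {m : ℕ} (x : Fin m → V) (u : V) : Prop :=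
  (∀ k, Btw G p u (x k)) ∧ Aligned G (Fin.cons u x)

lemma pal_aligned {m : ℕ} {x : Fin m → V} (h : PAl G p x) : Aligned G x :=
  aligned_of_forall_mem (fun k => ⟨k.succ, by simp⟩) h

lemma aligned_cons_comp {m m' : ℕ} {u : V} {x : Fin m → V} (g : Fin m' → Fin m)
    (h : Aligned G (Fin.cons u x)) : Aligned G (Fin.cons u (x ∘ g)) := by
  refine aligned_of_forall_mem (fun k => ?_) h
  refine Fin.cases ⟨0, rfl⟩ (fun i => ⟨(g i).succ, by simp⟩) k

lemma pal_comp {m m' : ℕ} {x : Fin m → V} (g : Fin m' → Fin m)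
    (h : PAl G p x) : PAl G p (x ∘ g) := aligned_cons_comp g h

lemma btw_self_left (a z : V) : Btw G a a z := by
  unfold Btw; simp [SimpleGraph.dist_self]

variable (hc : G.Connected) (hac : G.IsAcyclic)
include hc hac

lemma exists_isQ {m : ℕ} {x : Fin m → V} (hal : Aligned G x) : ∃ u, IsQ G p x u := by
  obtain ⟨a, b, hab⟩ := hal
  obtain ⟨m₀, hmab, hgate⟩ := exists_gate hc hac p a b
  refine ⟨m₀, fun k => hgate _ (hab k), ⟨a, b, fun k => ?_⟩⟩
  refine Fin.cases hmab (fun i => hab i) k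

lemma isQ_unique_aux {m : ℕ} {x : Fin (m+1) → V} {u u' : V}
    (hu : IsQ G p x u) (hu' : IsQ G p x u') (hpu : Btw G p u u') (hnp : ¬ PAl G p x) :
    u = u' := by
  by_contra hne
  apply hnp
  have hbu : ∀ k, Btw G u u' (x k) := by
    intro k
    have e1 := hu.1 k
    have e2 := hu'.1 k
    unfold Btw at *
    omega
  obtain ⟨c, d, hcd⟩ := hu.2
  have hcu : Btw G c u d := hcd 0
  have hcx : ∀ k, Btw G c (x k) d := fun k => hcd k.succ
  have hcu' : Btw G c u' d := btw_trans_seg hc hac hcu (hcx 0) (hbu 0)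
  obtain ⟨i₀, _, hmax⟩ := Finset.exists_max_image Finset.univ (fun k => G.dist u' (x k))
    ⟨0, Finset.mem_univ 0⟩
  have hkey : ∀ k, Btw G u' (x k) (x i₀) := by
    intro k
    have hm := hmax k (Finset.mem_univ k)
    have d1 := btw_total hc hac hcu hcu'
    have d2 := btw_total hc hac hcu' (hcx k)
    have d3 := btw_total hc hac hcu' (hcx i₀)
    have d4 := btw_total hc hac (hcx k) (hcx i₀)
    have d5 := btw_total hc hac hcu (hcx k)
    have d6 := btw_total hc hac hcu (hcx i₀)
    have hb1 := hbu k
    have hb2 := hbu i₀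
    have hpos : 0 < G.dist u u' := hc.pos_dist_of_ne hne
    have c1 : G.dist u' u = G.dist u u' := SimpleGraph.dist_comm
    have c2 : G.dist (x k) u' = G.dist u' (x k) := SimpleGraph.dist_comm
    have c3 : G.dist (x i₀) u' = G.dist u' (x i₀) := SimpleGraph.dist_comm
    have c4 : G.dist (x i₀) (x k) = G.dist (x k) (x i₀) := SimpleGraph.dist_comm
    have c5 : G.dist (x k) u = G.dist u (x k) := SimpleGraph.dist_comm
    have c6 : G.dist (x i₀) u = G.dist u (x i₀) := SimpleGraph.dist_comm
    unfold Btw at *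
    rcases d1 with d1|d1 <;> rcases d2 with d2|d2 <;> rcases d3 with d3|d3 <;>
      rcases d4 with d4|d4 <;> rcases d5 with d5|d5 <;> rcases d6 with d6|d6 <;> omega
  refine ⟨p, x i₀, fun k => ?_⟩
  refine Fin.cases (btw_self_left p (x i₀)) (fun i => ?_) k
  show Btw G p (x i) (x i₀)
  have e1 := hu'.1 i
  have e2 := hu'.1 i₀
  have e3 := hkey i
  unfold Btw at *
  omega

lemma isQ_unique {m : ℕ} {x : Fin (m+1) → V} {u u' : V} (hnp : ¬ PAl G p x)
    (hu : IsQ G p x u) (hu' : IsQ G p x u') : u = u' := by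
  rcases btw_total hc hac (hu.1 0) (hu'.1 0) with hb | hb
  · exact isQ_unique_aux p hc hac hu hu' hb hnp
  · exact (isQ_unique_aux p hc hac hu' hu hb hnp).symm

end QPoint

section QDef

variable (G) (p : V)

open Classical in
/-- The cone point assigned to a tuple. -/
noncomputable def qpt {m : ℕ} (x : Fin m → V) : V :=
  if h : (∃ u, IsQ G p x u ∧ ¬ PAl G p x) then h.choose else p

variable {G p}

lemma qpt_eq_p {m : ℕ} {x : Fin m → V} (hpal : PAl G p x) : qpt G p x = p :=
  dif_neg (by rintro ⟨u, _, hn⟩; exact hn hpal)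

variable (hc : G.Connected) (hac : G.IsAcyclic)
include hc hac

lemma isQ_qpt {m : ℕ} {x : Fin m → V} (hal : Aligned G x) : IsQ G p x (qpt G p x) := by
  unfold qpt
  split_ifs with h
  · exact h.choose_spec.1
  · by_cases hpal : PAl G p x
    · exact ⟨fun k => btw_self_left p (x k), hpal⟩
    · obtain ⟨u, hu⟩ := exists_isQ p hc hac hal
      exact absurd ⟨u, hu, hpal⟩ h

lemma qpt_eq_of_isQ {m : ℕ} {x : Fin (m+1) → V} {u : V} (hnp : ¬ PAl G p x)
    (hu : IsQ G p x u) : qpt G p x = u := by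
  have hal : Aligned G x :=
    aligned_of_forall_mem (fun k => ⟨k.succ, by simp⟩) hu.2
  exact isQ_unique p hc hac hnp (isQ_qpt (p := p) hc hac hal) hu

lemma qpt_comp_equiv {m : ℕ} {x : Fin (m+1) → V} (hal : Aligned G x)
    (σ : Equiv.Perm (Fin (m+1))) : qpt G p (x ∘ σ) = qpt G p x := by
  have hal' : Aligned G (x ∘ σ) := aligned_comp _ hal
  by_cases hpal : PAl G p x
  · rw [qpt_eq_p (pal_comp p σ hpal), qpt_eq_p hpal]
  · have hnp' : ¬ PAl G p (x ∘ σ) := by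
      intro hcon
      apply hpal
      have := pal_comp p (σ.symm : Fin (m+1) → Fin (m+1)) hcon
      have he : (x ∘ σ) ∘ (σ.symm : Fin (m+1) → Fin (m+1)) = x := by
        funext k; simp
      rwa [he] at this
    have hq := isQ_qpt (p := p) hc hac hal
    exact qpt_eq_of_isQ hc hac hnp'
      ⟨fun k => hq.1 (σ k), aligned_cons_comp (σ : Fin (m+1) → Fin (m+1)) hq.2⟩

lemma qpt_face {m : ℕ} (j : Fin (m+2)) {y : Fin (m+2) → V} (hal : Aligned G y) :
    qpt G p (y ∘ Fin.succAbove j) = qpt G p y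
      ∨ (¬ PAl G p y ∧ PAl G p (y ∘ Fin.succAbove j)) := by
  by_cases hpy : PAl G p y
  · left; rw [qpt_eq_p (pal_comp p _ hpy), qpt_eq_p hpy]
  · by_cases hpw : PAl G p (y ∘ Fin.succAbove j)
    · right; exact ⟨hpy, hpw⟩
    · left
      have hq := isQ_qpt (p := p) hc hac hal
      exact qpt_eq_of_isQ hc hac hpw
        ⟨fun k => hq.1 (Fin.succAbove j k), aligned_cons_comp _ hq.2⟩

lemma g1 {m : ℕ} (j : Fin (m+2)) {y : Fin (m+2) → V} (hal : Aligned G y)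
    (hnp : ¬ PAl G p y) (hpw : PAl G p (y ∘ Fin.succAbove j)) :
    Aligned G (Fin.cons p (Fin.cons (qpt G p y) (y ∘ Fin.succAbove j))) := by
  obtain ⟨a, b, hab⟩ := hpw
  have hq := isQ_qpt (p := p) hc hac hal
  have hpm : Btw G p (qpt G p y) (y (Fin.succAbove j 0)) := hq.1 _
  have hpa : Btw G a p b := hab 0
  have hw0 : Btw G a (y (Fin.succAbove j 0)) b := by
    have := hab (Fin.succ 0)
    exact this
  have hm : Btw G a (qpt G p y) b := btw_trans_seg hc hac hpa hw0 hpm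
  refine ⟨a, b, fun k => ?_⟩
  refine Fin.cases hpa (fun i => ?_) k
  refine Fin.cases hm (fun l => ?_) i
  have := hab l.succ
  simpa using this

end QDef

section Op

variable {W : Type*} [AddCommGroup W]

variable (G) (p : V)

/-- The cone operator: cone at the canonical cone point `qpt`. -/
noncomputable def Bop {n : ℕ} (f : (Fin (n+2) → V) → W) : (Fin (n+1) → V) → W :=
  fun x => if Aligned G x then f (Fin.cons (qpt G p x) x) else 0

variable {G p}

lemma cocycle_eval {n : ℕ} {f : (Fin (n+2) → V) → W} (hdf : cobd G (n+1) f = 0)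
    {y : Fin (n+2) → V} {u : V} (hal : Aligned G (Fin.cons u y)) :
    f y = ∑ j : Fin (n+2), ((-1 : ℤ) ^ (j : ℕ)) • f (Fin.cons u (y ∘ Fin.succAbove j)) := by
  have h0 := congrFun hdf (Fin.cons u y)
  simp only [cobd, Pi.zero_apply] at h0
  rw [if_pos hal, Fin.sum_univ_succ] at h0
  simp only [Fin.val_zero, pow_zero, one_smul, Fin.val_succ, cons_comp_succAbove_zero,
    cons_comp_succAbove_succ, pow_succ] at h0
  have hstep : ∀ j : Fin (n+2), ((-1:ℤ)^(j:ℕ) * (-1)) • f (Fin.cons u (y ∘ Fin.succAbove j))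
      = -(((-1:ℤ)^(j:ℕ)) • f (Fin.cons u (y ∘ Fin.succAbove j))) := by
    intro j; rw [mul_neg_one, neg_smul]
  rw [Finset.sum_congr rfl (fun j _ => hstep j), Finset.sum_neg_distrib,
    ← sub_eq_add_neg] at h0
  exact (sub_eq_zero.mp h0)

variable (hc : G.Connected) (hac : G.IsAcyclic)
include hc hac

lemma cl1 {n : ℕ} {f : (Fin (n+2) → V) → W} (hdf : cobd G (n+1) f = 0)
    {z : Fin (n+2) → V} (hz : PAl G p z) :
    cobd G n (Bop G p f) z = f z := by
  have hal : Aligned G z := pal_aligned p hz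
  simp only [cobd]
  rw [if_pos hal]
  rw [cocycle_eval hdf (hz : Aligned G (Fin.cons p z))]
  refine Finset.sum_congr rfl (fun j _ => ?_)
  have halj : Aligned G (z ∘ Fin.succAbove j) := aligned_comp _ hal
  simp only [Bop]
  rw [if_pos halj, qpt_eq_p (pal_comp p _ hz)]

lemma cl2 {n : ℕ} {f₁ : (Fin (n+2) → V) → W} (hdf : cobd G (n+1) f₁ = 0)
    (hvan : ∀ z : Fin (n+2) → V, PAl G p z → f₁ z = 0)
    {y : Fin (n+2) → V} (hal : Aligned G y) :
    cobd G n (Bop G p f₁) y = f₁ y := by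
  simp only [cobd]
  rw [if_pos hal]
  have hq := isQ_qpt (p := p) hc hac hal
  rw [cocycle_eval hdf hq.2]
  refine Finset.sum_congr rfl (fun j _ => ?_)
  have halj : Aligned G (y ∘ Fin.succAbove j) := aligned_comp _ hal
  simp only [Bop]
  rw [if_pos halj]
  rcases qpt_face (p := p) hc hac j hal with he | ⟨hnp, hpw⟩
  · rw [he]
  · rw [qpt_eq_p hpw]
    have hpw2 : PAl G p (Fin.cons p (y ∘ Fin.succAbove j)) := by
      refine aligned_of_forall_mem (fun k => ?_) hpw
      refine Fin.cases ⟨0, rfl⟩ (fun i => ⟨i, by simp⟩) k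
    have hpw3 : PAl G p (Fin.cons (qpt G p y) (y ∘ Fin.succAbove j)) :=
      g1 hc hac j hal hnp hpw
    rw [hvan _ hpw2, hvan _ hpw3]

omit hc hac

lemma cobd_sub_apply {m : ℕ} (F H : (Fin (m+1) → V) → W) (z : Fin (m+2) → V) :
    cobd G m (fun x => F x - H x) z = cobd G m F z - cobd G m H z := by
  simp only [cobd]
  split_ifs with h
  · rw [← Finset.sum_sub_distrib]
    exact Finset.sum_congr rfl (fun j _ => smul_sub _ _ _)
  · simp

lemma cobd_add_apply {m : ℕ} (F H : (Fin (m+1) → V) → W) (z : Fin (m+2) → V) :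
    cobd G m (fun x => F x + H x) z = cobd G m F z + cobd G m H z := by
  simp only [cobd]
  split_ifs with h
  · rw [← Finset.sum_add_distrib]
    exact Finset.sum_congr rfl (fun j _ => smul_add _ _ _)
  · simp

include hc hac

lemma bop_alternating {n : ℕ} {f : (Fin (n+2) → V) → W}
    (hfa : ∀ (σ : Equiv.Perm (Fin (n+2))) (x : Fin (n+2) → V),
      f (x ∘ σ) = (Equiv.Perm.sign σ : ℤ) • f x)
    (σ : Equiv.Perm (Fin (n+1))) (x : Fin (n+1) → V) :
    Bop G p f (x ∘ σ) = (Equiv.Perm.sign σ : ℤ) • Bop G p f x := by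
  by_cases hal : Aligned G x
  · have hal' : Aligned G (x ∘ σ) := aligned_comp _ hal
    simp only [Bop]
    rw [if_pos hal', if_pos hal, qpt_comp_equiv hc hac hal σ]
    set τ : Equiv.Perm (Fin (n+2)) := Equiv.Perm.decomposeFin.symm (0, σ) with hτ
    have hcons : Fin.cons (qpt G p x) (x ∘ σ) = (Fin.cons (qpt G p x) x) ∘ τ := by
      funext k
      refine Fin.cases ?_ (fun i => ?_) k
      · simp [hτ]
      · simp [hτ]
    rw [hcons, hfa τ]
    have : Equiv.Perm.sign τ = Equiv.Perm.sign σ := by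
      rw [hτ, Equiv.Perm.decomposeFin.symm_sign, if_pos rfl, one_mul]
    rw [this]
  · have hal' : ¬ Aligned G (x ∘ σ) := by
      rw [aligned_comp_equiv]; exact hal
    simp only [Bop]
    rw [if_neg hal', if_neg hal, smul_zero]

lemma cobd_alternating {n : ℕ} {h : (Fin (n+1) → V) → W}
    (hh : ∀ (σ : Equiv.Perm (Fin (n+1))) (z : Fin (n+1) → V),
      h (z ∘ σ) = (Equiv.Perm.sign σ : ℤ) • h z)
    (σ : Equiv.Perm (Fin (n+2))) (x : Fin (n+2) → V) :
    cobd G n h (x ∘ σ) = (Equiv.Perm.sign σ : ℤ) • cobd G n h x := by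
  have hswap : ∀ (i j : Fin (n+1)), i ≠ j → ∀ z : Fin (n+1) → V,
      h (z ∘ Equiv.swap i j) = - h z := by
    intro i j hij z
    rw [hh (Equiv.swap i j) z, Equiv.Perm.sign_swap hij]
    simp
  have hadj : ∀ (t : Fin (n+1)) (x : Fin (n+2) → V),
      cobd G n h (x ∘ Equiv.swap t.castSucc t.succ) = - cobd G n h x := by
    intro t x
    set a := t.castSucc with ha
    set b := t.succ with hb
    have hab : a ≠ b := (show t.castSucc < t.succ from Fin.castSucc_lt_succ).ne
    have hswapval : ∀ z : Fin (n+2), ((Equiv.swap a b z : Fin (n+2)) : ℕ)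
        = if (z:ℕ) = (t:ℕ) then (t:ℕ)+1 else if (z:ℕ) = (t:ℕ)+1 then (t:ℕ) else (z:ℕ) := by
      intro z
      have hza : ((a : Fin (n+2)) : ℕ) = (t:ℕ) := by simp [ha]
      have hzb : ((b : Fin (n+2)) : ℕ) = (t:ℕ)+1 := by simp [hb]
      rcases eq_or_ne z a with rfl|h1
      · rw [Equiv.swap_apply_left, hza, if_pos rfl]
        exact hzb
      · rcases eq_or_ne z b with rfl|h2
        · rw [Equiv.swap_apply_right, hzb, if_neg (by omega), if_pos rfl]
          exact hza
        · have hz1 : (z:ℕ) ≠ (t:ℕ) := fun hv => h1 (Fin.ext (by simpa [ha] using hv))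
          have hz2 : (z:ℕ) ≠ (t:ℕ)+1 := fun hv => h2 (Fin.ext (by simpa [hb] using hv))
          rw [Equiv.swap_apply_of_ne_of_ne h1 h2, if_neg hz1, if_neg hz2]
    by_cases hal : Aligned G x
    · have hal' : Aligned G (x ∘ Equiv.swap a b) := by
        rw [aligned_comp_equiv]; exact hal
      simp only [cobd]
      rw [if_pos hal', if_pos hal]
      have hre : ∑ j : Fin (n+2), ((-1:ℤ)^(j:ℕ)) • h (x ∘ Fin.succAbove j)
          = ∑ j : Fin (n+2), ((-1:ℤ)^((Equiv.swap a b j : Fin (n+2)):ℕ)) •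
              h (x ∘ Fin.succAbove (Equiv.swap a b j)) :=
        (Equiv.sum_comp (Equiv.swap a b)
          (fun j => ((-1:ℤ)^(j:ℕ)) • h (x ∘ Fin.succAbove j))).symm
      rw [hre, ← Finset.sum_neg_distrib]
      refine Finset.sum_congr rfl (fun j _ => ?_)
      rcases eq_or_ne j a with rfl|hja
      · -- j = a
        have hface : (x ∘ Equiv.swap a b) ∘ Fin.succAbove a = x ∘ Fin.succAbove b := by
          funext k
          simp only [Function.comp_apply]
          apply congrArg
          apply Fin.ext
          rw [hswapval, succAbove_val, succAbove_val, ha, hb]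
          simp only [Fin.coe_castSucc, Fin.val_succ]
          split_ifs <;> omega
        rw [hface, Equiv.swap_apply_left, ha, hb]
        rw [Fin.coe_castSucc, Fin.val_succ, pow_succ, mul_neg_one, neg_smul, neg_neg]
      · rcases eq_or_ne j b with rfl|hjb
        · have hface : (x ∘ Equiv.swap a b) ∘ Fin.succAbove b = x ∘ Fin.succAbove a := by
            funext k
            simp only [Function.comp_apply]
            apply congrArg
            apply Fin.ext
            rw [hswapval, succAbove_val, succAbove_val, ha, hb]
            simp only [Fin.coe_castSucc, Fin.val_succ]
            split_ifs <;> omega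
          rw [hface, Equiv.swap_apply_right, ha, hb]
          rw [Fin.coe_castSucc, Fin.val_succ, pow_succ, mul_neg_one, neg_smul]
        · -- j ≠ a, b
          obtain ⟨k₁, hk₁⟩ := Fin.exists_succAbove_eq (Ne.symm hja)
          obtain ⟨k₂, hk₂⟩ := Fin.exists_succAbove_eq (Ne.symm hjb)
          have hk₁₂ : k₁ ≠ k₂ := by
            intro hcon; rw [hcon, hk₂] at hk₁; exact hab hk₁.symm
          have hface : (x ∘ Equiv.swap a b) ∘ Fin.succAbove j
              = (x ∘ Fin.succAbove j) ∘ Equiv.swap k₁ k₂ := by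
            funext k
            simp only [Function.comp_apply]
            rcases eq_or_ne k k₁ with rfl|h1
            · rw [hk₁, Equiv.swap_apply_left, Equiv.swap_apply_left, hk₂]
            · rcases eq_or_ne k k₂ with rfl|h2
              · rw [hk₂, Equiv.swap_apply_right, Equiv.swap_apply_right, hk₁]
              · rw [Equiv.swap_apply_of_ne_of_ne h1 h2,
                  Equiv.swap_apply_of_ne_of_ne
                    (fun hcon => h1 (Fin.succAbove_right_injective (hcon.trans hk₁.symm)))
                    (fun hcon => h2 (Fin.succAbove_right_injective (hcon.trans hk₂.symm)))]
          rw [hface, hswap k₁ k₂ hk₁₂, Equiv.swap_apply_of_ne_of_ne hja hjb, smul_neg]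
    · have hal' : ¬ Aligned G (x ∘ Equiv.swap a b) := by
        rw [aligned_comp_equiv]; exact hal
      simp only [cobd]
      rw [if_neg hal', if_neg hal, neg_zero]
  -- closure argument
  have hmem : σ ∈ Submonoid.closure
      (Set.range fun i : Fin (n+1) ↦ Equiv.swap i.castSucc i.succ) := by
    rw [Equiv.Perm.mclosure_swap_castSucc_succ]; exact Submonoid.mem_top σ
  revert x
  induction hmem using Submonoid.closure_induction with
  | mem τ hτ =>
    obtain ⟨t, rfl⟩ := hτ
    intro x
    rw [hadj t x, Equiv.Perm.sign_swap (show t.castSucc < t.succ from Fin.castSucc_lt_succ).ne]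
    simp
  | one =>
    intro x
    have : x ∘ ⇑(1 : Equiv.Perm (Fin (n+2))) = x := by funext k; rfl
    rw [this]
    simp
  | mul σ₁ σ₂ _ _ ih1 ih2 =>
    intro x
    have hco : x ∘ ⇑(σ₁ * σ₂) = (x ∘ ⇑σ₁) ∘ ⇑σ₂ := by
      funext k; rfl
    rw [hco, ih2 (x ∘ ⇑σ₁), ih1 x, smul_smul, map_mul]
    rw [show ((Equiv.Perm.sign σ₂ : ℤ) * (Equiv.Perm.sign σ₁ : ℤ))
      = ((Equiv.Perm.sign σ₁ * Equiv.Perm.sign σ₂ : ℤˣ) : ℤ) by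
        rw [Units.val_mul]; ring]

end Op

section Norms

variable {W : Type*} [SeminormedAddCommGroup W]

lemma norm_neg_one_pow_zsmul (k : ℕ) (w : W) : ‖((-1:ℤ)^k) • w‖ = ‖w‖ := by
  rcases Nat.even_or_odd k with he|ho
  · rw [he.neg_one_pow, one_smul]
  · rw [ho.neg_one_pow, neg_smul, one_smul, norm_neg]

lemma cobd_norm_le {m : ℕ} {F : (Fin (m+1) → V) → W} {C : ℝ} (h0 : 0 ≤ C)
    (hb : ∀ z, ‖F z‖ ≤ C) (x : Fin (m+2) → V) :
    ‖cobd G m F x‖ ≤ (m+2) * C := by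
  simp only [cobd]
  split_ifs with h
  · calc ‖∑ j : Fin (m+2), ((-1:ℤ)^(j:ℕ)) • F (x ∘ Fin.succAbove j)‖
        ≤ ∑ j : Fin (m+2), ‖((-1:ℤ)^(j:ℕ)) • F (x ∘ Fin.succAbove j)‖ :=
          norm_sum_le _ _
      _ ≤ ∑ _j : Fin (m+2), C := by
          refine Finset.sum_le_sum (fun j _ => ?_)
          rw [norm_neg_one_pow_zsmul]
          exact hb _
      _ = (m+2) * C := by
          rw [Finset.sum_const, Finset.card_univ, Fintype.card_fin, nsmul_eq_mul]
          push_cast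
          ring
  · simp only [norm_zero]
    positivity

lemma bop_norm_le {n : ℕ} {F : (Fin (n+2) → V) → W} {C : ℝ} (h0 : 0 ≤ C)
    (hb : ∀ z, ‖F z‖ ≤ C) (p : V) (x : Fin (n+1) → V) :
    ‖Bop G p F x‖ ≤ C := by
  simp only [Bop]
  split_ifs with h
  · exact hb _
  · simpa using h0

end Norms

end S13

/-- Let `T` be a non-empty simplicial tree and `W` a real Banach
space. The augmented cochain complex
`0 → W → ℓ∞_align(T,W) → ℓ∞_align(T²,W) → ℓ∞_align(T³,W) → ⋯` is exact: the map
`W → ℓ∞_align(T,W)` sending `v` to the constant function `v` is injective, its image is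
the kernel of the first coboundary, and the kernel of each higher coboundary is the
image of the previous one. -/
theorem statement13 (G : SimpleGraph V) [Nonempty V] (hT : G.IsTree)
    {W : Type*} [NormedAddCommGroup W] [NormedSpace ℝ W] [CompleteSpace W] :
    (Function.Injective fun v : W => (Function.const (Fin 1 → V) v)) ∧
    (∀ v : W, cobd G 0 (Function.const (Fin 1 → V) v) = 0) ∧
    (∀ (n : ℕ) (g : (Fin (n + 1) → V) → W), IsAlFun G n g →
      cobd G (n + 1) (cobd G n g) = 0) ∧
    (∀ f : (Fin 1 → V) → W, IsAlFun G 0 f → cobd G 0 f = 0 →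
      ∃ v : W, f = Function.const (Fin 1 → V) v) ∧
    (∀ (n : ℕ) (f : (Fin (n + 2) → V) → W), IsAlFun G (n + 1) f → cobd G (n + 1) f = 0 →
      ∃ g : (Fin (n + 1) → V) → W, IsAlFun G n g ∧ cobd G n g = f) := by
  classical
  obtain ⟨hc, hac⟩ := hT
  set p : V := Classical.arbitrary V with hp
  have pair_aligned : ∀ z w : V, Aligned G (Fin.cons z (fun _ : Fin 1 => w)) := by
    intro z w
    refine ⟨z, w, fun k => ?_⟩
    refine Fin.cases ?_ (fun i => ?_) k
    · exact S13.btw_self_left z w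
    · show G.dist z w + G.dist w w = G.dist z w
      simp [SimpleGraph.dist_self]
  have single_aligned : ∀ x : Fin 1 → V, Aligned G x := by
    intro x
    exact ⟨x 0, x 0, fun k => by
      rw [Subsingleton.elim k (0 : Fin 1)]
      exact S13.btw_self_left (x 0) (x 0)⟩
  have pair_eval : ∀ (f : (Fin 1 → V) → W), cobd G 0 f = 0 →
      ∀ z w : V, f (fun _ => w) = f (fun _ => z) := by
    intro f hdf z w
    have h0 := congrFun hdf (Fin.cons z (fun _ : Fin 1 => w))
    simp only [cobd, Pi.zero_apply] at h0
    rw [if_pos (pair_aligned z w), Fin.sum_univ_two] at h0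
    simp only [Fin.val_zero, pow_zero, one_smul, Fin.val_one, pow_one, neg_smul,
      one_smul] at h0
    have e0 : (Fin.cons z (fun _ : Fin 1 => w) : Fin 2 → V) ∘ Fin.succAbove 0
        = (fun _ : Fin 1 => w) := by
      funext k
      rw [Subsingleton.elim k (0 : Fin 1)]
      rfl
    have e1 : (Fin.cons z (fun _ : Fin 1 => w) : Fin 2 → V) ∘ Fin.succAbove 1
        = (fun _ : Fin 1 => z) := by
      funext k
      rw [Subsingleton.elim k (0 : Fin 1)]
      rfl
    rw [e0, e1] at h0
    have h0' : f (fun _ => w) - f (fun _ => z) = 0 := by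
      rw [sub_eq_add_neg]; exact h0
    exact sub_eq_zero.mp h0'
  refine ⟨?_, ?_, ?_, ?_, ?_⟩
  · -- injectivity
    intro v w h
    have := congrFun h (fun _ : Fin 1 => p)
    simpa using this
  · -- constants are cocycles
    intro v
    funext x
    simp only [cobd, Pi.zero_apply]
    split_ifs with h
    · rw [Fin.sum_univ_two]
      simp
    · rfl
  · -- d ∘ d = 0
    intro n g _
    exact S13.cobd_cobd g
  · -- exactness at degree 0
    intro f hf hdf
    refine ⟨f (fun _ => p), ?_⟩
    funext x
    have hx : x = (fun _ : Fin 1 => x 0) := by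
      funext k
      rw [Subsingleton.elim k (0 : Fin 1)]
    rw [hx, pair_eval f hdf (x 0) p]
    rfl
  · -- exactness in higher degrees
    intro n f hf hdf
    set f₁ : (Fin (n+2) → V) → W := fun z => f z - cobd G n (S13.Bop G p f) z with hf₁
    have hdf₁ : cobd G (n+1) f₁ = 0 := by
      funext z
      rw [hf₁, S13.cobd_sub_apply]
      rw [congrFun hdf z, congrFun (S13.cobd_cobd (G := G) (S13.Bop G p f)) z]
      simp
    have hvan : ∀ z : Fin (n+2) → V, S13.PAl G p z → f₁ z = 0 := by
      intro z hz
      show f z - cobd G n (S13.Bop G p f) z = 0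
      rw [S13.cl1 hc hac hdf hz, sub_self]
    refine ⟨fun x => S13.Bop G p f x + S13.Bop G p f₁ x, ⟨?_, ?_, ?_⟩, ?_⟩
    · -- bounded
      obtain ⟨C, hC⟩ := hf.1
      set C' : ℝ := max C 0 with hC'
      have h0 : 0 ≤ C' := le_max_right _ _
      have hC'b : ∀ z, ‖f z‖ ≤ C' := fun z => (hC z).trans (le_max_left _ _)
      have hB : ∀ x, ‖S13.Bop G p f x‖ ≤ C' := S13.bop_norm_le h0 hC'b p
      have hcobdB : ∀ z, ‖cobd G n (S13.Bop G p f) z‖ ≤ (n+2) * C' :=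
        S13.cobd_norm_le h0 hB
      have hf₁b : ∀ z, ‖f₁ z‖ ≤ C' + (n+2) * C' := by
        intro z
        rw [hf₁]
        calc ‖f z - cobd G n (S13.Bop G p f) z‖
            ≤ ‖f z‖ + ‖cobd G n (S13.Bop G p f) z‖ := norm_sub_le _ _
          _ ≤ C' + (n+2) * C' := add_le_add (hC'b z) (hcobdB z)
      have h0' : (0:ℝ) ≤ C' + (n+2) * C' := by positivity
      have hB₁ : ∀ x, ‖S13.Bop G p f₁ x‖ ≤ C' + (n+2) * C' :=
        S13.bop_norm_le h0' hf₁b p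
      refine ⟨C' + (C' + (n+2) * C'), fun x => ?_⟩
      calc ‖S13.Bop G p f x + S13.Bop G p f₁ x‖
          ≤ ‖S13.Bop G p f x‖ + ‖S13.Bop G p f₁ x‖ := norm_add_le _ _
        _ ≤ C' + (C' + (n+2) * C') := add_le_add (hB x) (hB₁ x)
    · -- alternating
      intro σ x
      have ha1 := S13.bop_alternating (p := p) hc hac hf.2.1 σ x
      have hf₁alt : ∀ (τ : Equiv.Perm (Fin (n+2))) (z : Fin (n+2) → V),
          f₁ (z ∘ τ) = (Equiv.Perm.sign τ : ℤ) • f₁ z := by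
        intro τ z
        show f (z ∘ τ) - cobd G n (S13.Bop G p f) (z ∘ τ)
          = (Equiv.Perm.sign τ : ℤ) • (f z - cobd G n (S13.Bop G p f) z)
        have hBalt := S13.bop_alternating (p := p) hc hac hf.2.1
        have hco := S13.cobd_alternating (h := S13.Bop G p f) hc hac hBalt τ z
        rw [hco, hf.2.1 τ z, smul_sub]
      have ha2 := S13.bop_alternating (p := p) hc hac hf₁alt σ x
      show S13.Bop G p f (x ∘ σ) + S13.Bop G p f₁ (x ∘ σ)
        = (Equiv.Perm.sign σ : ℤ) • (S13.Bop G p f x + S13.Bop G p f₁ x)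
      rw [ha1, ha2, smul_add]
    · -- vanishing on non-aligned
      intro x hx
      show S13.Bop G p f x + S13.Bop G p f₁ x = 0
      simp only [S13.Bop]
      rw [if_neg hx, if_neg hx, add_zero]
    · -- cobd g = f
      funext y
      show cobd G n (fun x => S13.Bop G p f x + S13.Bop G p f₁ x) y = f y
      rw [S13.cobd_add_apply]
      by_cases hal : Aligned G y
      · rw [S13.cl2 hc hac hdf₁ hvan hal]
        show cobd G n (S13.Bop G p f) y + (f y - cobd G n (S13.Bop G p f) y) = f y
        abel
      · have h1 : cobd G n (S13.Bop G p f) y = 0 := by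
          simp only [cobd]; rw [if_neg hal]
        have h2 : cobd G n (S13.Bop G p f₁) y = 0 := by
          simp only [cobd]; rw [if_neg hal]
        rw [h1, h2, hf.2.2 y hal, add_zero]
end

section
/- Let T be a tree, let G be a group of automorphisms of T acting without inversions and strongly transitively, let L be a geodesic line in T and let H ≤ G be the setwise stabilizer of L. Let x = (x₀,…,x_n) be a tuple of vertices of T all of whose coordinates lie on the segment [x₀,x_n], with x₀ ≠ x_n. If g, g′ ∈ G are such that all coordinates of g·x and all coordinates of g′·x lie on L, then there exists h ∈ H with h(g·x_k) = g′·x_k for all 0 ≤ k ≤ n. -/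
/-!
Common definitions: trees are modelled as simple graphs `G` on a vertex type `V`
satisfying `G.IsTree`; `Seg G a b` is the geodesic segment `[a,b]` (the set of
vertices lying on the geodesic from `a` to `b`); `Aligned` tuples are those
contained in some geodesic segment; `AltChain V R n` is the module `C_n(T,R)` of
alternating `n`-chains; `chainOf x` is the class of a tuple; `alignedSub G R n`
is `A_n(T,R)`; `cnorm` is the ℓ¹-quotient norm.
-/

open Finsupp

variable {V : Type*}

/-- A geodesic line in `T`: an isometrically embedded copy of `ℤ`. -/
def IsLine (G : SimpleGraph V) (ℓ : ℤ → V) : Prop :=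
  ∀ m n : ℤ, G.dist (ℓ m) (ℓ n) = (m - n).natAbs

/-- The action of `Γ` on `T` is strongly transitive: it is transitive on the pairs
consisting of a geodesic line and a geometric (unoriented) edge contained in it. -/
def StronglyTransitive (G : SimpleGraph V) (Γ : Type*) [SMul Γ V] : Prop :=
  ∀ ℓ₁ ℓ₂ : ℤ → V, IsLine G ℓ₁ → IsLine G ℓ₂ → ∀ m₁ m₂ : ℤ,
    ∃ γ : Γ, ((γ • ·) '' Set.range ℓ₁ = Set.range ℓ₂) ∧
      ({γ • ℓ₁ m₁, γ • ℓ₁ (m₁ + 1)} : Set V) = {ℓ₂ m₂, ℓ₂ (m₂ + 1)}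

/-- The action of `Γ` on `T` is without inversions: no element exchanges two adjacent
vertices. -/
def NoInversions (G : SimpleGraph V) (Γ : Type*) [SMul Γ V] : Prop :=
  ∀ (γ : Γ) (u v : V), G.Adj u v → ¬(γ • u = v ∧ γ • v = u)

private lemma treePointUnique15 {V : Type*} (G : SimpleGraph V) (hT : G.IsTree)
    {u w y z : V}
    (hy : G.dist u y + G.dist y w = G.dist u w)
    (hz : G.dist u z + G.dist z w = G.dist u w)
    (ht : G.dist u y = G.dist u z) : y = z := by
  have hconn := hT.isConnected
  obtain ⟨p1, hp1⟩ := hconn.exists_walk_length_eq_dist u y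
  obtain ⟨p2, hp2⟩ := hconn.exists_walk_length_eq_dist y w
  obtain ⟨q1, hq1⟩ := hconn.exists_walk_length_eq_dist u z
  obtain ⟨q2, hq2⟩ := hconn.exists_walk_length_eq_dist z w
  have hW1 : (p1.append p2).length = G.dist u w := by
    rw [SimpleGraph.Walk.length_append]; omega
  have hW2 : (q1.append q2).length = G.dist u w := by
    rw [SimpleGraph.Walk.length_append]; omega
  have hP1 := (p1.append p2).isPath_of_length_eq_dist hW1
  have hP2 := (q1.append q2).isPath_of_length_eq_dist hW2
  have heq : p1.append p2 = q1.append q2 := (hT.existsUnique_path u w).unique hP1 hP2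
  have h1 : (p1.append p2).getVert (G.dist u y) = y := by
    rw [← hp1, SimpleGraph.Walk.getVert_append]
    simp
  have h2 : (q1.append q2).getVert (G.dist u y) = z := by
    rw [ht, ← hq1, SimpleGraph.Walk.getVert_append]
    simp
  rw [← h1, heq, h2]


/-- Let `T` be a tree, `Γ` a group of automorphisms of `T` acting
without inversions and strongly transitively, `ℓ` a geodesic line in `T` and `H ≤ Γ`
the setwise stabiliser of the line. Let `x = (x₀,…,xₙ)` be a tuple of vertices all of
whose coordinates lie on the segment `[x₀,xₙ]`, with `x₀ ≠ xₙ`. If `g, g′ ∈ Γ` are such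
that all coordinates of `g·x` and of `g′·x` lie on the line, then there is `h ∈ H` with
`h (g xₖ) = g′ xₖ` for all `k`. -/
theorem statement15 (G : SimpleGraph V) (hT : G.IsTree)
    (Γ : Type*) [Group Γ] [MulAction Γ V] [FaithfulSMul Γ V]
    (hauto : ∀ (γ : Γ) (u v : V), G.Adj u v ↔ G.Adj (γ • u) (γ • v))
    (hninv : NoInversions G Γ) (htrans : StronglyTransitive G Γ)
    (ℓ : ℤ → V) (hℓ : IsLine G ℓ)
    (n : ℕ) (x : Fin (n + 1) → V)
    (hx : ∀ k, x k ∈ Seg G (x 0) (x (Fin.last n)))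
    (hne : x 0 ≠ x (Fin.last n))
    (g g' : Γ)
    (hg : ∀ k, g • x k ∈ Set.range ℓ) (hg' : ∀ k, g' • x k ∈ Set.range ℓ) :
    ∃ h : Γ, (∀ v : V, v ∈ Set.range ℓ ↔ h • v ∈ Set.range ℓ) ∧
      ∀ k, h • g • x k = g' • x k := by
  classical
  have hconn := hT.isConnected
  have hdistLe : ∀ (γ : Γ) (u v : V), G.dist (γ • u) (γ • v) ≤ G.dist u v := by
    intro γ u v
    obtain ⟨p, hp⟩ := hconn.exists_walk_length_eq_dist u v
    calc G.dist (γ • u) (γ • v)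
        ≤ (p.map ⟨fun w => γ • w, fun h => (hauto γ _ _).mp h⟩).length :=
          SimpleGraph.dist_le _
      _ = p.length := SimpleGraph.Walk.length_map _ _
      _ = G.dist u v := hp
  have hdist : ∀ (γ : Γ) (u v : V), G.dist (γ • u) (γ • v) = G.dist u v := by
    intro γ u v
    refine le_antisymm (hdistLe γ u v) ?_
    have := hdistLe γ⁻¹ (γ • u) (γ • v)
    simpa [inv_smul_smul] using this
  have hLinj : Function.Injective ℓ := by
    intro m m' h
    have hd := hℓ m m'
    rw [h, SimpleGraph.dist_self] at hd
    omega
  have stab_of_img : ∀ h : Γ, ((h • ·) '' Set.range ℓ = Set.range ℓ) →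
      ∀ v : V, v ∈ Set.range ℓ ↔ h • v ∈ Set.range ℓ := by
    intro h himg v
    constructor
    · intro hv; rw [← himg]; exact ⟨v, hv, rfl⟩
    · intro hv
      rw [← himg] at hv
      obtain ⟨u, hu, huv⟩ := hv
      rwa [← MulAction.injective h huv]
  have img_mul : ∀ h₁ h₂ : Γ, ((h₁ • ·) '' Set.range ℓ = Set.range ℓ) →
      ((h₂ • ·) '' Set.range ℓ = Set.range ℓ) →
      (((h₁ * h₂) • ·) '' Set.range ℓ = Set.range ℓ) := by
    intro h₁ h₂ i₁ i₂
    have hco : ((h₁ * h₂) • · : V → V) = (h₁ • ·) ∘ (h₂ • ·) :=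
      funext fun v => mul_smul _ _ _
    rw [hco, Set.image_comp, i₂, i₁]
  have hiso : ∀ h : Γ, ((h • ·) '' Set.range ℓ = Set.range ℓ) →
      ∃ v e : ℤ, (e = 1 ∨ e = -1) ∧ ∀ m : ℤ, h • ℓ m = ℓ (v + e * m) := by
    intro h himg
    have key : ∀ m : ℤ, ∃ j : ℤ, ℓ j = h • ℓ m := by
      intro m
      have : h • ℓ m ∈ Set.range ℓ := by
        rw [← himg]; exact ⟨ℓ m, ⟨m, rfl⟩, rfl⟩
      exact this
    choose ψ hψ using key
    have hψd : ∀ m m' : ℤ, (ψ m - ψ m').natAbs = (m - m').natAbs := by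
      intro m m'
      calc (ψ m - ψ m').natAbs = G.dist (ℓ (ψ m)) (ℓ (ψ m')) := (hℓ _ _).symm
        _ = G.dist (h • ℓ m) (h • ℓ m') := by rw [hψ, hψ]
        _ = G.dist (ℓ m) (ℓ m') := hdist _ _ _
        _ = (m - m').natAbs := hℓ _ _
    have h10 := hψd 1 0
    have hcase : ψ 1 - ψ 0 = 1 ∨ ψ 1 - ψ 0 = -1 := by omega
    refine ⟨ψ 0, ψ 1 - ψ 0, hcase, fun m => ?_⟩
    rw [← hψ m]
    have d0 := hψd m 0
    have d1 := hψd m 1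
    rcases hcase with h1 | h1 <;> rw [h1] <;> congr 1 <;> omega
  have T1 : ∀ p q : ℤ, ∃ h : Γ, ((h • ·) '' Set.range ℓ = Set.range ℓ) ∧
      ((∀ m : ℤ, h • ℓ m = ℓ (m + (q - p))) ∨
        (∀ m : ℤ, h • ℓ m = ℓ (p + q + 1 - m))) := by
    intro p q
    obtain ⟨γ, himg, hedge⟩ := htrans ℓ ℓ hℓ hℓ p q
    obtain ⟨v, e, he, hφ⟩ := hiso γ himg
    rw [hφ p, hφ (p + 1), Set.pair_eq_pair_iff] at hedge
    refine ⟨γ, himg, ?_⟩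
    rcases he with rfl | rfl
    · rcases hedge with ⟨e1, e2⟩ | ⟨e1, e2⟩
      · have i1 := hLinj e1
        exact Or.inl fun m => by rw [hφ m]; congr 1; omega
      · exfalso
        have i1 := hLinj e1
        have i2 := hLinj e2
        omega
    · rcases hedge with ⟨e1, e2⟩ | ⟨e1, e2⟩
      · exfalso
        have i1 := hLinj e1
        have i2 := hLinj e2
        omega
      · have i1 := hLinj e1
        exact Or.inr fun m => by rw [hφ m]; congr 1; omega
  have T2 : ∀ (h : Γ) (r : ℤ), (∀ m : ℤ, h • ℓ m = ℓ (r - m)) → r % 2 = 0 := by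
    intro h r hf
    by_contra hodd
    obtain ⟨m, rfl⟩ : ∃ m : ℤ, r = 2 * m + 1 := ⟨(r - 1) / 2, by omega⟩
    have adj : G.Adj (ℓ m) (ℓ (m + 1)) :=
      SimpleGraph.dist_eq_one_iff_adj.mp (by rw [hℓ]; omega)
    exact hninv h (ℓ m) (ℓ (m + 1)) adj
      ⟨by rw [hf m]; congr 1; omega, by rw [hf (m + 1)]; congr 1; omega⟩
  have TransEven : ∀ c : ℤ, c % 2 = 0 →
      ∃ h : Γ, ((h • ·) '' Set.range ℓ = Set.range ℓ) ∧
        ∀ m : ℤ, h • ℓ m = ℓ (m + c) := by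
    intro c hc
    obtain ⟨h, himg, hf | hf⟩ := T1 0 c
    · exact ⟨h, himg, fun m => by rw [hf m]; congr 1; omega⟩
    · exfalso
      have := T2 h (c + 1) fun m => by rw [hf m]; congr 1; omega
      omega
  have TransAll : ∀ c₀ c : ℤ,
      (∃ h : Γ, ((h • ·) '' Set.range ℓ = Set.range ℓ) ∧
        ∀ m : ℤ, h • ℓ m = ℓ (m + c₀)) → (c - c₀) % 2 = 0 →
      ∃ h : Γ, ((h • ·) '' Set.range ℓ = Set.range ℓ) ∧
        ∀ m : ℤ, h • ℓ m = ℓ (m + c) := by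
    rintro c₀ c ⟨h₁, i₁, f₁⟩ hpar
    obtain ⟨h₂, i₂, f₂⟩ := TransEven (c - c₀) hpar
    refine ⟨h₁ * h₂, img_mul _ _ i₁ i₂, fun m => ?_⟩
    rw [mul_smul, f₂ m, f₁ (m + (c - c₀))]
    congr 1; omega
  have ReflAll : ∀ r₀ r : ℤ,
      (∃ h : Γ, ((h • ·) '' Set.range ℓ = Set.range ℓ) ∧
        ∀ m : ℤ, h • ℓ m = ℓ (r₀ - m)) → (r - r₀) % 2 = 0 →
      ∃ h : Γ, ((h • ·) '' Set.range ℓ = Set.range ℓ) ∧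
        ∀ m : ℤ, h • ℓ m = ℓ (r - m) := by
    rintro r₀ r ⟨h₁, i₁, f₁⟩ hpar
    obtain ⟨h₂, i₂, f₂⟩ := TransEven (r₀ - r) (by omega)
    refine ⟨h₁ * h₂, img_mul _ _ i₁ i₂, fun m => ?_⟩
    rw [mul_smul, f₂ m, f₁ (m + (r₀ - r))]
    congr 1; omega
  choose a ha using hg
  choose b hb using hg'
  have keyA : ∀ k j, (a k - a j).natAbs = G.dist (x k) (x j) := by
    intro k j
    calc (a k - a j).natAbs = G.dist (ℓ (a k)) (ℓ (a j)) := (hℓ _ _).symm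
      _ = G.dist (g • x k) (g • x j) := by rw [ha, ha]
      _ = G.dist (x k) (x j) := hdist _ _ _
  have keyB : ∀ k j, (b k - b j).natAbs = G.dist (x k) (x j) := by
    intro k j
    calc (b k - b j).natAbs = G.dist (ℓ (b k)) (ℓ (b j)) := (hℓ _ _).symm
      _ = G.dist (g' • x k) (g' • x j) := by rw [hb, hb]
      _ = G.dist (x k) (x j) := hdist _ _ _
  have hD : 1 ≤ G.dist (x 0) (x (Fin.last n)) := by
    have h0 : G.dist (x 0) (x (Fin.last n)) ≠ 0 :=
      fun h0 => hne (hconn.dist_eq_zero_iff.mp h0)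
    omega
  have h0a : ∀ k, (g' * g⁻¹) • ℓ (a k) = ℓ (b k) := by
    intro k
    rw [ha k, mul_smul, inv_smul_smul]
    exact (hb k).symm
  have goal_of : ∀ h : Γ, ((h • ·) '' Set.range ℓ = Set.range ℓ) →
      (∀ k, h • ℓ (a k) = ℓ (b k)) →
      (∃ h : Γ, (∀ v : V, v ∈ Set.range ℓ ↔ h • v ∈ Set.range ℓ) ∧
        ∀ k, h • g • x k = g' • x k) := by
    intro h ih hf
    refine ⟨h, stab_of_img h ih, fun k => ?_⟩
    rw [← ha k, hf k, hb k]
  have hA := keyA (Fin.last n) 0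
  have hB := keyB (Fin.last n) 0
  rw [SimpleGraph.dist_comm] at hA hB
  have ekey : ∀ k, (a k - a 0).natAbs = (b k - b 0).natAbs ∧
      (a k - a (Fin.last n)).natAbs = (b k - b (Fin.last n)).natAbs :=
    fun k => ⟨(keyA k 0).trans (keyB k 0).symm,
      (keyA k (Fin.last n)).trans (keyB k (Fin.last n)).symm⟩
  obtain ⟨σ, hσ, hal⟩ : ∃ σ : ℤ, (σ = 1 ∨ σ = -1) ∧
      a (Fin.last n) = a 0 + σ * (G.dist (x 0) (x (Fin.last n)) : ℤ) := by
    rcases (show a (Fin.last n) = a 0 + (G.dist (x 0) (x (Fin.last n)) : ℤ) ∨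
        a (Fin.last n) = a 0 - (G.dist (x 0) (x (Fin.last n)) : ℤ) by omega) with h1 | h1
    · exact ⟨1, Or.inl rfl, by omega⟩
    · exact ⟨-1, Or.inr rfl, by omega⟩
  obtain ⟨σ', hσ', hbl⟩ : ∃ σ' : ℤ, (σ' = 1 ∨ σ' = -1) ∧
      b (Fin.last n) = b 0 + σ' * (G.dist (x 0) (x (Fin.last n)) : ℤ) := by
    rcases (show b (Fin.last n) = b 0 + (G.dist (x 0) (x (Fin.last n)) : ℤ) ∨
        b (Fin.last n) = b 0 - (G.dist (x 0) (x (Fin.last n)) : ℤ) by omega) with h1 | h1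
    · exact ⟨1, Or.inl rfl, by omega⟩
    · exact ⟨-1, Or.inr rfl, by omega⟩
  have d1 : G.dist (ℓ (b 0)) ((g' * g⁻¹) • ℓ (a 0 + σ)) = 1 := by
    rw [← h0a 0, hdist, hℓ]
    rcases hσ with rfl | rfl <;> omega
  have d2 : G.dist ((g' * g⁻¹) • ℓ (a 0 + σ)) (ℓ (b (Fin.last n))) =
      G.dist (x 0) (x (Fin.last n)) - 1 := by
    rw [← h0a (Fin.last n), hdist, hℓ, hal]
    rcases hσ with rfl | rfl <;> omega
  have d3 : G.dist (ℓ (b 0)) (ℓ (b (Fin.last n))) = G.dist (x 0) (x (Fin.last n)) := by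
    rw [hℓ, hbl]
    rcases hσ' with rfl | rfl <;> omega
  have d4 : G.dist (ℓ (b 0)) (ℓ (b 0 + σ')) = 1 := by
    rw [hℓ]
    rcases hσ' with rfl | rfl <;> omega
  have d5 : G.dist (ℓ (b 0 + σ')) (ℓ (b (Fin.last n))) =
      G.dist (x 0) (x (Fin.last n)) - 1 := by
    rw [hℓ, hbl]
    rcases hσ' with rfl | rfl <;> omega
  have trans1 : (g' * g⁻¹) • ℓ (a 0 + σ) = ℓ (b 0 + σ') := by
    refine treePointUnique15 G hT (u := ℓ (b 0)) (w := ℓ (b (Fin.last n))) ?_ ?_ ?_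
    · rw [d1, d2, d3]; omega
    · rw [d4, d5, d3]; omega
    · rw [d1, d4]
  have adj : G.Adj (ℓ (a 0)) (ℓ (a 0 + σ)) :=
    SimpleGraph.dist_eq_one_iff_adj.mp (by rw [hℓ]; rcases hσ with rfl | rfl <;> omega)
  by_cases hss : σ' = σ
  · subst hss
    obtain ⟨h, himg, hf | hf⟩ := T1 (a 0) (b 0)
    · refine goal_of h himg fun k => ?_
      obtain ⟨e0, e1⟩ := ekey k
      rw [hf (a k)]
      congr 1
      rcases hσ with rfl | rfl <;> omega
    · exfalso
      obtain ⟨h', i', f'⟩ := ReflAll (a 0 + b 0 + 1) (a 0 + b 0 + σ') ⟨h, himg, hf⟩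
        (by rcases hσ with rfl | rfl <;> omega)
      have w1 : (h' * (g' * g⁻¹)) • ℓ (a 0) = ℓ (a 0 + σ') := by
        rw [mul_smul, h0a 0, f' (b 0)]
        congr 1; omega
      have w2 : (h' * (g' * g⁻¹)) • ℓ (a 0 + σ') = ℓ (a 0) := by
        rw [mul_smul, trans1, f' (b 0 + σ')]
        congr 1; omega
      exact hninv _ _ _ adj ⟨w1, w2⟩
  · have hss' : σ' = -σ := by
      rcases hσ with rfl | rfl <;> rcases hσ' with rfl | rfl <;> omega
    subst hss'
    obtain ⟨h, himg, hf | hf⟩ := T1 (a 0) (b 0 - 1)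
    · exfalso
      obtain ⟨h', i', f'⟩ := TransAll (b 0 - 1 - a 0) (a 0 + σ - b 0) ⟨h, himg, hf⟩
        (by rcases hσ with rfl | rfl <;> omega)
      have w1 : (h' * (g' * g⁻¹)) • ℓ (a 0) = ℓ (a 0 + σ) := by
        rw [mul_smul, h0a 0, f' (b 0)]
        congr 1; omega
      have w2 : (h' * (g' * g⁻¹)) • ℓ (a 0 + σ) = ℓ (a 0) := by
        rw [mul_smul, trans1, f' (b 0 + -σ)]
        congr 1; omega
      exact hninv _ _ _ adj ⟨w1, w2⟩
    · refine goal_of h himg fun k => ?_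
      obtain ⟨e0, e1⟩ := ekey k
      rw [hf (a k)]
      congr 1
      rcases hσ with rfl | rfl <;> omega
end
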